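/- arXiv:2111.11713 — 7 statements merged into one kernel-verified Lean document; each statement's English description precedes it below -/
import Mathlib

section
/- Let H be a complex Hilbert space, Q ⊆ ℂⁿ a complete circular domain centered at 0, and suppose f : Q → 𝓑(H) has a homogeneous polynomial expansion f(z) = ∑_{k=0}^∞ P_k(z) converging at every z ∈ Q, with ‖f(z)‖ < 1 for all z ∈ Q and f(0) = a₀·I for some a₀ ∈ ℂ with |a₀| < 1. Then ∑_{k=0}^∞ ‖P_k(z)‖ < 1 for every point z of the homothetic domain (1/3)Q, i.e. for every z = (1/3)·w with w ∈ Q. -/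
set_option maxHeartbeats 1000000
set_option linter.unusedVariables false
open Metric Set Filter


lemma moebius_aux {H : Type*} [NormedAddCommGroup H] [InnerProductSpace ℂ H]
    (T : H →L[ℂ] H) (hT : ‖T‖ ≤ 1) (a : ℂ) (ha : ‖a‖ ≤ 1) (x : H) :
    ‖(a • (1 : H →L[ℂ] H) - T) x‖ ≤ ‖((1 : H →L[ℂ] H) - (starRingEnd ℂ a) • T) x‖ := by
  have hTx : ‖T x‖ ≤ ‖x‖ := by
    calc ‖T x‖ ≤ ‖T‖ * ‖x‖ := T.le_opNorm x
    _ ≤ 1 * ‖x‖ := mul_le_mul_of_nonneg_right hT (norm_nonneg x)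
    _ = ‖x‖ := one_mul _
  have h1 : (a • (1 : H →L[ℂ] H) - T) x = a • x - T x := by simp
  have h2 : ((1 : H →L[ℂ] H) - (starRingEnd ℂ a) • T) x = x - (starRingEnd ℂ a) • T x := by simp
  rw [h1, h2]
  have e1 := @norm_sub_sq ℂ _ _ _ _ (a • x) (T x)
  have e2 := @norm_sub_sq ℂ _ _ _ _ x ((starRingEnd ℂ a) • T x)
  have c1 : (inner ℂ (a • x) (T x) : ℂ) = (starRingEnd ℂ a) * inner ℂ x (T x) := inner_smul_left _ _ _
  have c2 : (inner ℂ x ((starRingEnd ℂ a) • T x) : ℂ) = (starRingEnd ℂ a) * inner ℂ x (T x) :=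
    inner_smul_right _ _ _
  have hsq : ‖a • x - T x‖ ^ 2 ≤ ‖x - (starRingEnd ℂ a) • T x‖ ^ 2 := by
    have na : ‖a • x‖ = ‖a‖ * ‖x‖ := norm_smul a x
    have nb : ‖(starRingEnd ℂ a) • T x‖ = ‖a‖ * ‖T x‖ := by
      rw [norm_smul]; simp
    rw [e1, e2, c1, c2, na, nb]
    have key : (0:ℝ) ≤ (1 - ‖a‖ ^ 2) * (‖x‖ ^ 2 - ‖T x‖ ^ 2) := by
      apply mul_nonneg
      · nlinarith [norm_nonneg a]
      · nlinarith [norm_nonneg (T x)]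
    nlinarith [key]
  exact le_of_pow_le_pow_left₀ two_ne_zero (norm_nonneg _) hsq

lemma coeff_one_bound {H : Type*} [NormedAddCommGroup H] [InnerProductSpace ℂ H] [CompleteSpace H]
    (c : ℕ → (H →L[ℂ] H)) (a₀ : ℂ) (ha₀ : ‖a₀‖ < 1) (h0 : c 0 = a₀ • 1)
    (hsum : ∀ η : ℂ, ‖η‖ ≤ 1 → ∃ S, HasSum (fun m => η ^ m • c m) S ∧ ‖S‖ ≤ 1) :
    ‖c 1‖ ≤ 1 - ‖a₀‖ ^ 2 := by
  classical
  set Φ : ℂ → (H →L[ℂ] H) := fun η => ∑' m, η ^ m • c m with hΦdef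
  have hΦsum : ∀ η : ℂ, ‖η‖ ≤ 1 → HasSum (fun m => η ^ m • c m) (Φ η) := by
    intro η hη; obtain ⟨S, hS, -⟩ := hsum η hη
    rw [show Φ η = S from hS.tsum_eq]; exact hS
  have hΦle : ∀ η : ℂ, ‖η‖ ≤ 1 → ‖Φ η‖ ≤ 1 := by
    intro η hη; obtain ⟨S, hS, h1⟩ := hsum η hη
    rw [show Φ η = S from hS.tsum_eq]; exact h1
  set p : FormalMultilinearSeries ℂ ℂ (H →L[ℂ] H) :=
    fun m => ContinuousMultilinearMap.mkPiRing ℂ (Fin m) (c m) with hpdef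
  have hpn : ∀ m, ‖p m‖ = ‖c m‖ := fun m => ContinuousMultilinearMap.norm_mkPiRing (c m)
  have hc_summable : Summable c := by
    have h := (hΦsum 1 (by norm_num)).summable
    simpa using h
  have htc : Tendsto (fun m => ‖c m‖) atTop (nhds 0) := by
    simpa using hc_summable.tendsto_atTop_zero.norm
  have hradius : 1 ≤ p.radius := by
    have := p.le_radius_of_tendsto (r := 1) (l := 0) (by simpa [hpn] using htc)
    simpa using this
  have hps : HasFPowerSeriesOnBall Φ p 0 1 := by
    refine ⟨hradius, by norm_num, ?_⟩
    intro y hy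
    have hy' : ‖y‖ ≤ 1 := by
      rw [EMetric.mem_ball] at hy
      have : ‖y‖₊ < 1 := by simpa [edist_eq_enorm_sub, enorm_eq_nnnorm] using hy
      exact_mod_cast this.le
    have := hΦsum y hy'
    simpa [hpdef, ContinuousMultilinearMap.mkPiRing_apply, Finset.prod_const] using this
  have hΦ0 : Φ 0 = a₀ • 1 := by
    have h := hΦsum 0 (by norm_num)
    have h' := hasSum_single (f := fun m => (0:ℂ) ^ m • c m) 0
      (by intro b hb; simp [zero_pow hb])
    have : Φ 0 = (0:ℂ) ^ 0 • c 0 := h.unique h'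
    simpa [h0] using this
  have hunit : ∀ η : ℂ, ‖η‖ ≤ 1 →
      ∃ u : (H →L[ℂ] H)ˣ, (u : H →L[ℂ] H) = 1 - (starRingEnd ℂ a₀) • Φ η := by
    intro η hη
    have hnorm : ‖(starRingEnd ℂ a₀) • Φ η‖ < 1 := by
      rw [norm_smul]
      calc ‖(starRingEnd ℂ a₀)‖ * ‖Φ η‖ ≤ ‖a₀‖ * 1 := by
            apply mul_le_mul _ (hΦle η hη) (norm_nonneg _) (norm_nonneg _)
            simp
        _ < 1 := by simpa using ha₀
    exact ⟨Units.oneSub _ hnorm, rfl⟩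
  set Ψ : ℂ → (H →L[ℂ] H) :=
    fun η => (a₀ • 1 - Φ η) * Ring.inverse (1 - (starRingEnd ℂ a₀) • Φ η) with hΨdef
  have hball : ∀ η : ℂ, η ∈ ball (0:ℂ) 1 → ‖η‖ ≤ 1 := by
    intro η hη; rw [mem_ball_zero_iff] at hη; exact hη.le
  have hΦdiff : DifferentiableOn ℂ Φ (ball (0:ℂ) 1) := by
    refine (hps.differentiableOn).mono ?_
    intro η hη
    rw [mem_ball_zero_iff] at hη
    rw [EMetric.mem_ball, edist_eq_enorm_sub, sub_zero, enorm_eq_nnnorm]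
    exact_mod_cast hη
  have hΨdiff : DifferentiableOn ℂ Ψ (ball (0:ℂ) 1) := by
    intro η hη
    have h1 : DifferentiableWithinAt ℂ Φ (ball (0:ℂ) 1) η := hΦdiff η hη
    have h2 : DifferentiableWithinAt ℂ
        (fun η => Ring.inverse ((1 : H →L[ℂ] H) - (starRingEnd ℂ a₀) • Φ η)) (ball (0:ℂ) 1) η := by
      obtain ⟨u, hu⟩ := hunit η (hball η hη)
      have hiu : IsUnit ((1 : H →L[ℂ] H) - (starRingEnd ℂ a₀) • Φ η) := by
        rw [← hu]; exact u.isUnit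
      exact (differentiableAt_inverse (𝕜 := ℂ) hiu).comp_differentiableWithinAt η
        ((h1.const_smul (starRingEnd ℂ a₀)).const_sub (1 : H →L[ℂ] H))
    exact ((h1.const_sub _).mul h2)
  have hΨle : ∀ η : ℂ, ‖η‖ ≤ 1 → ‖Ψ η‖ ≤ 1 := by
    intro η hη
    obtain ⟨u, hu⟩ := hunit η hη
    have hT : ‖Φ η‖ ≤ 1 := hΦle η hη
    refine ContinuousLinearMap.opNorm_le_bound _ zero_le_one ?_
    intro y
    have hinv : Ring.inverse ((1 : H →L[ℂ] H) - (starRingEnd ℂ a₀) • Φ η) = (↑u⁻¹ : H →L[ℂ] H) := by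
      rw [← hu, Ring.inverse_unit]
    set x : H := (↑u⁻¹ : H →L[ℂ] H) y with hx
    have hux : ((1 : H →L[ℂ] H) - (starRingEnd ℂ a₀) • Φ η) x = y := by
      have h1 : ((u : H →L[ℂ] H) * (↑u⁻¹ : H →L[ℂ] H)) y = y := by
        rw [u.mul_inv]; exact ContinuousLinearMap.one_apply y
      rw [← hu, hx, ← ContinuousLinearMap.mul_apply]
      exact h1
    have hΨy : Ψ η y = (a₀ • 1 - Φ η) x := by
      simp [hΨdef, hinv, ContinuousLinearMap.mul_apply, hx]
    calc ‖Ψ η y‖ = ‖(a₀ • 1 - Φ η) x‖ := by rw [hΨy]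
      _ ≤ ‖((1 : H →L[ℂ] H) - (starRingEnd ℂ a₀) • Φ η) x‖ := moebius_aux _ hT a₀ ha₀.le x
      _ = ‖y‖ := by rw [hux]
      _ = 1 * ‖y‖ := (one_mul _).symm
  -- derivative computations
  have hd1 : HasDerivAt Φ (c 1) 0 := by
    have h := hps.hasFPowerSeriesAt.hasDerivAt
    have hcoeff : (p 1 fun _ => (1:ℂ)) = c 1 := by
      rw [hpdef]
      rw [ContinuousMultilinearMap.mkPiRing_apply]
      simp
    rwa [hcoeff] at h
  obtain ⟨u₀, hu₀⟩ := hunit 0 (by norm_num)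
  set r : ℂ := 1 - (starRingEnd ℂ a₀) * a₀ with hrdef
  have hrre : r = ((1 - ‖a₀‖ ^ 2 : ℝ) : ℂ) := by
    rw [hrdef, mul_comm, Complex.mul_conj, Complex.normSq_eq_norm_sq]
    push_cast
    ring
  have hrpos : (0:ℝ) < 1 - ‖a₀‖ ^ 2 := by nlinarith [norm_nonneg a₀]
  have hrne : r ≠ 0 := by
    rw [hrre]
    exact_mod_cast hrpos.ne'
  have hval0 : (1 : H →L[ℂ] H) - (starRingEnd ℂ a₀) • Φ 0 = r • 1 := by
    rw [hΦ0, smul_smul, hrdef, sub_smul, one_smul]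
  have hu₀inv : (↑u₀⁻¹ : H →L[ℂ] H) = r⁻¹ • 1 := by
    apply u₀.inv_eq_of_mul_eq_one_right
    rw [hu₀, hval0, smul_mul_assoc, mul_smul_comm, smul_smul, one_mul,
      mul_inv_cancel₀ hrne, one_smul]
  have hg : HasDerivAt (fun η => (1 : H →L[ℂ] H) - (starRingEnd ℂ a₀) • Φ η)
      (-((starRingEnd ℂ a₀) • c 1)) 0 := (hd1.const_smul (starRingEnd ℂ a₀)).const_sub 1
  have hinvd : HasDerivAt (fun η => Ring.inverse ((1 : H →L[ℂ] H) - (starRingEnd ℂ a₀) • Φ η))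
      (-((↑u₀⁻¹ : H →L[ℂ] H) * (-((starRingEnd ℂ a₀) • c 1)) * ↑u₀⁻¹)) 0 := by
    have h := hasFDerivAt_ringInverse (𝕜 := ℂ) u₀
    rw [show ((u₀ : H →L[ℂ] H)) = (1 : H →L[ℂ] H) - (starRingEnd ℂ a₀) • Φ 0 from hu₀] at h
    have := h.comp_hasDerivAt 0 hg
    simp at this ⊢; exact this
  have hΨd : HasDerivAt Ψ
      ((-(c 1)) * Ring.inverse ((1 : H →L[ℂ] H) - (starRingEnd ℂ a₀) • Φ 0) +
        (a₀ • 1 - Φ 0) * (-((↑u₀⁻¹ : H →L[ℂ] H) * (-((starRingEnd ℂ a₀) • c 1)) * ↑u₀⁻¹))) 0 :=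
    (hd1.const_sub (a₀ • 1)).mul hinvd
  have hinv0 : Ring.inverse ((1 : H →L[ℂ] H) - (starRingEnd ℂ a₀) • Φ 0) = r⁻¹ • 1 := by
    rw [← hu₀, Ring.inverse_unit, hu₀inv]
  have hΨD : HasDerivAt Ψ (-(r⁻¹ • c 1)) 0 := by
    convert hΨd using 1
    rw [hinv0, hΦ0, sub_self, zero_mul, add_zero, neg_mul, mul_smul_comm, mul_one]
  have hΨ0 : Ψ 0 = 0 := by
    simp [hΨdef, hΦ0]
  have hDle : ‖deriv Ψ 0‖ ≤ 1 := by
    apply le_of_forall_pos_le_add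
    intro ε hε
    have hmaps : MapsTo Ψ (ball (0:ℂ) 1) (ball (Ψ 0) (1 + ε)) := by
      intro η hη
      rw [mem_ball, hΨ0, dist_zero_right]
      exact lt_of_le_of_lt (hΨle η (hball η hη)) (by linarith)
    have := Complex.norm_deriv_le_div_of_mapsTo_ball hΨdiff (hmaps.mono_right ball_subset_closedBall) one_pos
    simpa using this
  rw [hΨD.deriv] at hDle
  have hnr : ‖(-(r⁻¹ • c 1))‖ = (1 - ‖a₀‖ ^ 2)⁻¹ * ‖c 1‖ := by
    rw [norm_neg, norm_smul, norm_inv, hrre]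
    congr 2
    rw [Complex.norm_real, Real.norm_eq_abs]
    exact abs_of_pos hrpos
  rw [hnr] at hDle
  calc ‖c 1‖ = (1 - ‖a₀‖ ^ 2) * ((1 - ‖a₀‖ ^ 2)⁻¹ * ‖c 1‖) := by
        rw [← mul_assoc, mul_inv_cancel₀ hrpos.ne', one_mul]
    _ ≤ (1 - ‖a₀‖ ^ 2) * 1 := by
        apply mul_le_mul_of_nonneg_left hDle hrpos.le
    _ = 1 - ‖a₀‖ ^ 2 := mul_one _

/-- Multidimensional operator valued Bohr inequality on a complete circular domain:
if `f(z) = ∑ₖ Pₖ(z)` (with `Pₖ(z) = ∑_{|α|=k} A_α z^α`) converges on `Q`,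
`‖f(z)‖ < 1` on `Q` and `f(0) = a₀ I` with `|a₀| < 1`, then
`∑ₖ ‖Pₖ(z)‖ < 1` on the homothetic domain `(1/3)Q`. -/
theorem bohr_multidim_one_third
    {H : Type*} [NormedAddCommGroup H] [InnerProductSpace ℂ H] [CompleteSpace H]
    {n : ℕ} (Q : Set (Fin n → ℂ))
    (hQopen : IsOpen Q) (hQconn : IsConnected Q) (hQ0 : (0 : Fin n → ℂ) ∈ Q)
    (hQcirc : ∀ z ∈ Q, ∀ ξ : ℂ, ‖ξ‖ ≤ 1 → ξ • z ∈ Q)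
    (f : (Fin n → ℂ) → (H →L[ℂ] H))
    (P : ℕ → (Fin n → ℂ) → (H →L[ℂ] H))
    (A : (Fin n → ℕ) → (H →L[ℂ] H))
    (hP : ∀ (k : ℕ) (z : Fin n → ℂ),
      HasSum (fun α : {α : Fin n → ℕ // ∑ i, α i = k} =>
        (∏ i, z i ^ α.1 i) • A α.1) (P k z))
    (hexp : ∀ z ∈ Q, HasSum (fun k => P k z) (f z))
    (hlt : ∀ z ∈ Q, ‖f z‖ < 1)
    (a₀ : ℂ) (ha₀ : ‖a₀‖ < 1)
    (hf0 : f 0 = a₀ • (1 : H →L[ℂ] H))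
    (w : Fin n → ℂ) (hw : w ∈ Q) :
    Summable (fun k => ‖P k (((3 : ℂ)⁻¹) • w)‖) ∧
      ∑' k, ‖P k (((3 : ℂ)⁻¹) • w)‖ < 1 := by
  classical
  set c : ℕ → (H →L[ℂ] H) := fun k => P k w with hcdef
  -- homogeneity
  have homog : ∀ (k : ℕ) (ξ : ℂ), P k (ξ • w) = ξ ^ k • c k := by
    intro k ξ
    have h1 := hP k (ξ • w)
    have h2 := (hP k w).const_smul (ξ ^ k)
    have he : (fun α : {α : Fin n → ℕ // ∑ i, α i = k} =>
        (∏ i, (ξ • w) i ^ α.1 i) • A α.1)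
        = fun α => ξ ^ k • ((∏ i, w i ^ α.1 i) • A α.1) := by
      funext α
      rw [smul_smul]
      congr 1
      calc (∏ i, (ξ • w) i ^ α.1 i) = ∏ i, ξ ^ α.1 i * w i ^ α.1 i := by
            refine Finset.prod_congr rfl fun i _ => ?_
            rw [Pi.smul_apply, smul_eq_mul, mul_pow]
        _ = (∏ i, ξ ^ α.1 i) * ∏ i, w i ^ α.1 i := Finset.prod_mul_distrib
        _ = ξ ^ k * ∏ i, w i ^ α.1 i := by
            rw [Finset.prod_pow_eq_pow_sum, α.2]
    rw [he] at h1
    exact h1.unique h2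
  have hdisc : ∀ ξ : ℂ, ‖ξ‖ ≤ 1 → HasSum (fun k => ξ ^ k • c k) (f (ξ • w)) := by
    intro ξ hξ
    have hmem : ξ • w ∈ Q := hQcirc w hw ξ hξ
    have h := hexp _ hmem
    simpa [homog] using h
  have hdiscn : ∀ ξ : ℂ, ‖ξ‖ ≤ 1 → ‖f (ξ • w)‖ < 1 := fun ξ hξ => hlt _ (hQcirc w hw ξ hξ)
  have hc0 : c 0 = a₀ • 1 := by
    have h := hdisc 0 (by norm_num)
    have h' := hasSum_single (f := fun k => (0:ℂ) ^ k • c k) 0 (by intro b hb; simp [zero_pow hb])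
    have heq : f ((0:ℂ) • w) = (0:ℂ) ^ 0 • c 0 := h.unique h'
    rw [zero_smul, hf0] at heq
    simpa using heq.symm
  -- coefficient bounds
  have hck : ∀ k : ℕ, k ≠ 0 → ‖c k‖ ≤ 1 - ‖a₀‖ ^ 2 := by
    intro k hk
    have hkpos : 0 < k := Nat.pos_of_ne_zero hk
    have hsumhyp : ∀ η : ℂ, ‖η‖ ≤ 1 →
        ∃ S, HasSum (fun m => η ^ m • c (m * k)) S ∧ ‖S‖ ≤ 1 := by
      intro η hη
      obtain ⟨ξ, hξk⟩ := IsAlgClosed.exists_pow_nat_eq η hkpos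
      have hξ1 : ‖ξ‖ ≤ 1 := by
        by_contra hcon
        push_neg at hcon
        have h1 : 1 < ‖ξ‖ ^ k := one_lt_pow₀ hcon hk
        rw [← norm_pow, hξk] at h1
        exact absurd hη (not_le.mpr h1)
      set ω : ℂ := Complex.exp (2 * Real.pi * Complex.I / k) with hωdef
      have hprim : IsPrimitiveRoot ω k := Complex.isPrimitiveRoot_exp k hk
      have hωk : ω ^ k = 1 := hprim.pow_eq_one
      have hω1 : ‖ω‖ = 1 := by
        have h1 : ‖ω‖ ^ k = 1 := by rw [← norm_pow, hωk, norm_one]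
        rcases lt_trichotomy ‖ω‖ 1 with h | h | h
        · exfalso
          have := pow_lt_one₀ (norm_nonneg ω) h hk
          rw [h1] at this; exact lt_irrefl _ this
        · exact h
        · exfalso
          have := one_lt_pow₀ h hk
          rw [h1] at this; exact lt_irrefl _ this
      have hnorm1 : ∀ j : ℕ, ‖ω ^ j * ξ‖ ≤ 1 := by
        intro j
        rw [norm_mul, norm_pow, hω1, one_pow, one_mul]
        exact hξ1
      have hterm : ∀ j : ℕ, HasSum (fun m => (ω ^ j * ξ) ^ m • c m) (f ((ω ^ j * ξ) • w)) :=
        fun j => hdisc _ (hnorm1 j)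
      set S₀ : H →L[ℂ] H := (k:ℂ)⁻¹ • ∑ j ∈ Finset.range k, f ((ω ^ j * ξ) • w) with hS₀def
      have havg : HasSum (fun m => ((k:ℂ)⁻¹ * ∑ j ∈ Finset.range k, (ω ^ j * ξ) ^ m) • c m) S₀ := by
        have h := (hasSum_sum (s := Finset.range k)
            (f := fun j m => (ω ^ j * ξ) ^ m • c m)
            (a := fun j => f ((ω ^ j * ξ) • w)) (fun j _ => hterm j)).const_smul ((k:ℂ)⁻¹)
        convert h using 1
        funext m
        rw [← Finset.sum_smul, smul_smul]
      have hcoef : ∀ m : ℕ, ((k:ℂ)⁻¹ * ∑ j ∈ Finset.range k, (ω ^ j * ξ) ^ m)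
          = if k ∣ m then ξ ^ m else 0 := by
        intro m
        have hsplit : ∑ j ∈ Finset.range k, (ω ^ j * ξ) ^ m
            = (∑ j ∈ Finset.range k, (ω ^ m) ^ j) * ξ ^ m := by
          rw [Finset.sum_mul]
          refine Finset.sum_congr rfl fun j _ => ?_
          rw [mul_pow, ← pow_mul, ← pow_mul, mul_comm j m]
        by_cases hdvd : k ∣ m
        · have hωm : ω ^ m = 1 := (hprim.pow_eq_one_iff_dvd m).mpr hdvd
          rw [hsplit, hωm, if_pos hdvd]
          simp only [one_pow, Finset.sum_const, Finset.card_range, nsmul_eq_mul, mul_one]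
          rw [← mul_assoc, inv_mul_cancel₀ (by exact_mod_cast hk : (k:ℂ) ≠ 0), one_mul]
        · have hωm : ω ^ m ≠ 1 := fun hc => hdvd ((hprim.pow_eq_one_iff_dvd m).mp hc)
          rw [hsplit, geom_sum_eq hωm, ← pow_mul, mul_comm m k, pow_mul, hωk, one_pow,
            sub_self, zero_div, zero_mul, mul_zero, if_neg hdvd]
      have hif : HasSum (fun m => if k ∣ m then ξ ^ m • c m else 0) S₀ := by
        convert havg using 1
        funext m
        rw [hcoef m]
        by_cases h : k ∣ m <;> simp [h]
      have hinj : Function.Injective (fun m : ℕ => m * k) :=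
        fun a b h => Nat.eq_of_mul_eq_mul_right hkpos h
      have hre : HasSum (fun m => η ^ m • c (m * k)) S₀ := by
        have hzero : ∀ x ∉ Set.range (fun m : ℕ => m * k),
            (if k ∣ x then ξ ^ x • c x else 0) = 0 := by
          intro x hx
          have : ¬ k ∣ x := by
            intro hc
            obtain ⟨l, hl⟩ := hc
            exact hx ⟨l, by rw [hl]; ring⟩
          simp [this]
        have h := (hinj.hasSum_iff hzero).mpr hif
        convert h using 1
        funext m
        have hd : k ∣ m * k := dvd_mul_left k m
        simp only [Function.comp_apply, if_pos hd]
        rw [mul_comm m k, pow_mul, hξk]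
      refine ⟨S₀, hre, ?_⟩
      rw [hS₀def, norm_smul]
      have h1 : ‖((k:ℂ)⁻¹)‖ = (k:ℝ)⁻¹ := by
        rw [norm_inv]
        norm_num
      have h2 : ‖∑ j ∈ Finset.range k, f ((ω ^ j * ξ) • w)‖ ≤ (k:ℝ) := by
        calc ‖∑ j ∈ Finset.range k, f ((ω ^ j * ξ) • w)‖
            ≤ ∑ j ∈ Finset.range k, ‖f ((ω ^ j * ξ) • w)‖ := norm_sum_le _ _
          _ ≤ ∑ _j ∈ Finset.range k, (1:ℝ) :=
              Finset.sum_le_sum fun j _ => (hdiscn _ (hnorm1 j)).le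
          _ = (k:ℝ) := by simp
      calc ‖((k:ℂ)⁻¹)‖ * ‖∑ j ∈ Finset.range k, f ((ω ^ j * ξ) • w)‖
          ≤ (k:ℝ)⁻¹ * (k:ℝ) := by
            rw [h1]
            exact mul_le_mul_of_nonneg_left h2 (by positivity)
        _ = 1 := inv_mul_cancel₀ (by exact_mod_cast hk)
    have h := coeff_one_bound (fun m => c (m * k)) a₀ ha₀ (by simpa using hc0) hsumhyp
    simpa using h
  -- final assembly
  have hval : ∀ k : ℕ, ‖P k (((3:ℂ)⁻¹) • w)‖ = (3:ℝ)⁻¹ ^ k * ‖c k‖ := by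
    intro k
    rw [homog k ((3:ℂ)⁻¹), norm_smul, norm_pow, norm_inv]
    norm_num
  set B : ℝ := 1 - ‖a₀‖ ^ 2 with hBdef
  have hBpos : 0 < B := by nlinarith [norm_nonneg a₀]
  have hc0n : ‖c 0‖ ≤ ‖a₀‖ := by
    rw [hc0, norm_smul]
    calc ‖a₀‖ * ‖(1 : H →L[ℂ] H)‖ ≤ ‖a₀‖ * 1 := by
          apply mul_le_mul_of_nonneg_left _ (norm_nonneg a₀)
          rw [ContinuousLinearMap.one_def]
          exact ContinuousLinearMap.norm_id_le
      _ = ‖a₀‖ := mul_one _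
  have hbound : ∀ k : ℕ, ‖P k (((3:ℂ)⁻¹) • w)‖ ≤ (‖a₀‖ + B) * (3:ℝ)⁻¹ ^ k := by
    intro k
    rw [hval k, mul_comm]
    apply mul_le_mul_of_nonneg_right _ (by positivity)
    rcases Nat.eq_zero_or_pos k with hk | hk
    · subst hk
      exact le_trans hc0n (by nlinarith)
    · exact le_trans (hck k hk.ne') (by nlinarith [norm_nonneg a₀])
  have hsummable : Summable (fun k => ‖P k (((3:ℂ)⁻¹) • w)‖) := by
    apply Summable.of_nonneg_of_le (fun k => norm_nonneg _) hbound
    exact (summable_geometric_of_lt_one (by norm_num) (by norm_num)).mul_left _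
  refine ⟨hsummable, ?_⟩
  rw [Summable.tsum_eq_zero_add hsummable]
  have htail1 : Summable (fun k : ℕ => ‖P (k+1) (((3:ℂ)⁻¹) • w)‖) :=
    (summable_nat_add_iff 1).mpr hsummable
  have htail2 : Summable (fun k : ℕ => B * (3:ℝ)⁻¹ ^ (k+1)) := by
    have : Summable (fun k : ℕ => (B * (3:ℝ)⁻¹) * (3:ℝ)⁻¹ ^ k) :=
      (summable_geometric_of_lt_one (by norm_num) (by norm_num)).mul_left _
    apply this.congr
    intro k
    rw [pow_succ]
    ring
  have htail : ∑' k : ℕ, ‖P (k+1) (((3:ℂ)⁻¹) • w)‖ ≤ ∑' k : ℕ, B * (3:ℝ)⁻¹ ^ (k+1) := by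
    apply htail1.tsum_le_tsum _ htail2
    intro k
    rw [hval (k+1), mul_comm]
    apply mul_le_mul_of_nonneg_right (hck (k+1) (Nat.succ_ne_zero k)) (by positivity)
  have hgeosum : ∑' k : ℕ, B * (3:ℝ)⁻¹ ^ (k+1) = B / 2 := by
    have h1 : (fun k : ℕ => B * (3:ℝ)⁻¹ ^ (k+1)) = fun k : ℕ => (B * (3:ℝ)⁻¹) * (3:ℝ)⁻¹ ^ k := by
      funext k
      rw [pow_succ]
      ring
    rw [h1, tsum_mul_left, tsum_geometric_of_lt_one (by norm_num) (by norm_num)]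
    norm_num
    ring
  have h0term : ‖P 0 (((3:ℂ)⁻¹) • w)‖ ≤ ‖a₀‖ := by
    rw [hval 0]
    simpa using hc0n
  have := le_trans htail (le_of_eq hgeosum)
  nlinarith [sq_nonneg (1 - ‖a₀‖), norm_nonneg a₀]
end

section
/- Let H be a complex Hilbert space, Q ⊆ ℂⁿ a complete circular domain centered at 0, and suppose f : Q → 𝓑(H) has a homogeneous polynomial expansion f(z) = ∑_{k=0}^∞ P_k(z) converging at every z ∈ Q, with ‖f(z)‖ < 1 for all z ∈ Q and f(0) = a₀·I for some a₀ ∈ ℂ with |a₀| < 1; assume also that ∑_{k=1}^∞ k‖P_k(z)‖² converges at every z ∈ Q. Let l ≥ 1 and let G(w) = c₁w + c₂w² + ⋯ + c_l w^l be a polynomial with nonnegative real coefficients satisfying 8c₁(3/8)² + 24c₂(3/8)⁴ + ⋯ + 8(2l−1)c_l(3/8)^{2l} ≤ 1, i.e. ∑_{m=1}^l 8(2m−1)c_m(3/8)^{2m} ≤ 1. Then for every w ∈ Q and every r ∈ [0,1/3], the point z = r·w satisfies ∑_{k=0}^∞ ‖P_k(z)‖ + G(∑_{k=1}^∞ k‖P_k(z)‖²)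 ≤ 1. -/
set_option maxHeartbeats 1000000

open Metric Set ContinuousLinearMap

section Aux
open Metric Set ContinuousLinearMap

lemma mobius_norm_le {H : Type*} [NormedAddCommGroup H] [InnerProductSpace ℂ H]
    [CompleteSpace H] (a : ℂ) (ha : ‖a‖ < 1) (v : H →L[ℂ] H) (hv : ‖v‖ ≤ 1) :
    ‖(v - a • 1) * Ring.inverse (1 - (starRingEnd ℂ a) • v)‖ ≤ 1 := by
  have hnorm : ‖(starRingEnd ℂ a) • v‖ < 1 := by
    rw [norm_smul]
    calc ‖(starRingEnd ℂ a)‖ * ‖v‖ ≤ ‖a‖ * 1 := by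
          apply mul_le_mul _ hv (norm_nonneg _) (norm_nonneg _)
          simp
      _ < 1 := by simpa using ha
  set u : (H →L[ℂ] H)ˣ := Units.oneSub _ hnorm with hu
  rw [NormedRing.inverse_one_sub _ hnorm]
  apply ContinuousLinearMap.opNorm_le_bound _ zero_le_one
  intro x
  rw [ContinuousLinearMap.mul_apply]
  set y : H := (↑u⁻¹ : H →L[ℂ] H) x with hy
  have hxy : x = y - (starRingEnd ℂ a) • (v y) := by
    have : ((↑u * ↑u⁻¹ : H →L[ℂ] H)) x = x := by
      rw [u.mul_inv]; simp
    rw [ContinuousLinearMap.mul_apply] at this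
    rw [← hy] at this
    have hval : (↑u : H →L[ℂ] H) = 1 - (starRingEnd ℂ a) • v := Units.val_oneSub _ _
    rw [hval] at this
    simpa using this.symm
  have hvy : ‖v y‖ ≤ ‖y‖ := by
    calc ‖v y‖ ≤ ‖v‖ * ‖y‖ := v.le_opNorm y
      _ ≤ 1 * ‖y‖ := by apply mul_le_mul_of_nonneg_right hv (norm_nonneg _)
      _ = ‖y‖ := one_mul _
  have key : ‖(v - a • 1) y‖ ^ 2 ≤ ‖y - (starRingEnd ℂ a) • (v y)‖ ^ 2 := by
    have e1 : (v - a • 1) y = v y - a • y := by simp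
    rw [e1, norm_sub_sq (𝕜 := ℂ), norm_sub_sq (𝕜 := ℂ)]
    have e2 : (inner ℂ (v y) (a • y) : ℂ) = a * inner ℂ (v y) y := by
      rw [inner_smul_right]
    have e3 : (inner ℂ y ((starRingEnd ℂ a) • (v y)) : ℂ)
        = (starRingEnd ℂ) (a * inner ℂ (v y) y) := by
      rw [inner_smul_right, map_mul, ← inner_conj_symm]
    have e4 : RCLike.re (K := ℂ) (inner ℂ (v y) (a • y) : ℂ)
        = RCLike.re (K := ℂ) (inner ℂ y ((starRingEnd ℂ a) • (v y)) : ℂ) := by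
      rw [e2, e3, RCLike.conj_re]
    rw [e4, norm_smul, norm_smul]
    have hca : ‖(starRingEnd ℂ a)‖ = ‖a‖ := by simp
    rw [hca]
    have h1 : ‖v y‖ ^ 2 ≤ ‖y‖ ^ 2 := by
      apply pow_le_pow_left₀ (norm_nonneg _) hvy
    have h2 : ‖a‖ ^ 2 ≤ 1 := by nlinarith [norm_nonneg a]
    nlinarith [mul_nonneg (sub_nonneg.2 h2) (sub_nonneg.2 h1)]
  have hfin : ‖(v - a • 1) y‖ ≤ ‖y - (starRingEnd ℂ a) • (v y)‖ := by
    have := Real.sqrt_le_sqrt key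
    rwa [Real.sqrt_sq (norm_nonneg _), Real.sqrt_sq (norm_nonneg _)] at this
  rw [one_mul]
  calc ‖(v - a • 1) y‖ ≤ ‖y - (starRingEnd ℂ a) • (v y)‖ := hfin
    _ = ‖x‖ := by rw [← hxy]

open Metric Set ContinuousLinearMap

lemma deriv_bound_of_ball {H : Type*} [NormedAddCommGroup H] [InnerProductSpace ℂ H]
    [CompleteSpace H] (v : ℂ → (H →L[ℂ] H))
    (hd : DifferentiableOn ℂ v (ball 0 1))
    (hb : ∀ ζ ∈ ball (0 : ℂ) 1, ‖v ζ‖ ≤ 1)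
    (a : ℂ) (ha : ‖a‖ < 1) (h0 : v 0 = a • 1)
    (D : H →L[ℂ] H) (hD : HasDerivAt v D 0) :
    ‖D‖ ≤ 1 - ‖a‖ ^ 2 := by
  set c := starRingEnd ℂ a with hc
  set t : ℝ := 1 - ‖a‖ ^ 2 with ht
  have ht0 : 0 < t := by nlinarith [norm_nonneg a]
  set V : ℂ → (H →L[ℂ] H) := fun ζ => (v ζ - a • 1) * Ring.inverse (1 - c • v ζ) with hV
  have hball0 : (0 : ℂ) ∈ ball (0 : ℂ) 1 := mem_ball_self one_pos
  have hunit : ∀ ζ ∈ ball (0 : ℂ) 1, ‖c • v ζ‖ < 1 := by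
    intro ζ hζ
    rw [norm_smul]
    calc ‖c‖ * ‖v ζ‖ ≤ ‖a‖ * 1 := by
          apply mul_le_mul _ (hb ζ hζ) (norm_nonneg _) (norm_nonneg _)
          simp [hc]
      _ < 1 := by simpa using ha
  have hVb : ∀ ζ ∈ ball (0 : ℂ) 1, ‖V ζ‖ ≤ 1 := fun ζ hζ =>
    mobius_norm_le a ha (v ζ) (hb ζ hζ)
  have hVd : DifferentiableOn ℂ V (ball 0 1) := by
    intro ζ hζ
    have h1 : DifferentiableAt ℂ v ζ := hd.differentiableAt (isOpen_ball.mem_nhds hζ)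
    have h2 : DifferentiableAt ℂ (fun ζ => Ring.inverse (1 - c • v ζ)) ζ := by
      apply DifferentiableAt.inverse
      · exact (differentiableAt_const _).sub (h1.const_smul c)
      · exact (Units.oneSub _ (hunit ζ hζ)).isUnit
    exact (((h1.sub (differentiableAt_const _)).mul h2)).differentiableWithinAt
  -- value of the inverse factor at 0
  have e : (1 : ℂ) - c * a = ((t : ℝ) : ℂ) := by
    rw [hc, Complex.conj_mul', ht]
    push_cast
    ring
  have h00 : (1 : H →L[ℂ] H) - c • v 0 = ((t : ℂ)) • 1 := by
    calc (1 : H →L[ℂ] H) - c • v 0 = 1 - (c * a) • 1 := by rw [h0, smul_smul]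
      _ = ((1 : ℂ) - c * a) • 1 := by rw [sub_smul, one_smul]
      _ = ((t : ℂ)) • 1 := by rw [e]
  have hB0 : Ring.inverse ((1 : H →L[ℂ] H) - c • v 0) = ((t : ℂ))⁻¹ • 1 := by
    rw [h00]
    have tne : ((t : ℂ)) ≠ 0 := by exact_mod_cast ht0.ne'
    have h1 : ((t:ℂ)) • (1 : H →L[ℂ] H) * ((t:ℂ))⁻¹ • 1 = 1 := by
      rw [smul_mul_smul_comm, mul_one, mul_inv_cancel₀ tne, one_smul]
    have h2 : ((t:ℂ))⁻¹ • (1 : H →L[ℂ] H) * ((t:ℂ)) • 1 = 1 := by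
      rw [smul_mul_smul_comm, mul_one, inv_mul_cancel₀ tne, one_smul]
    have hinv : IsUnit (((t : ℂ)) • (1 : H →L[ℂ] H)) := ⟨⟨_, _, h1, h2⟩, rfl⟩
    obtain ⟨un, hun⟩ := hinv
    rw [← hun, Ring.inverse_unit]
    have hmul : (↑un * ((t : ℂ))⁻¹ • (1:H →L[ℂ] H)) = 1 := by rw [hun]; exact h1
    calc (↑un⁻¹ : H →L[ℂ] H) = ↑un⁻¹ * (↑un * ((t : ℂ))⁻¹ • 1) := by rw [hmul, mul_one]
      _ = ((t : ℂ))⁻¹ • 1 := by rw [← mul_assoc, un.inv_mul, one_mul]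
  -- derivative of V at 0
  have hdiffB : DifferentiableAt ℂ (fun ζ => Ring.inverse ((1:H →L[ℂ] H) - c • v ζ)) 0 := by
    apply DifferentiableAt.inverse
    · exact (differentiableAt_const _).sub (hD.differentiableAt.const_smul c)
    · exact (Units.oneSub _ (hunit 0 hball0)).isUnit
  have hVD : HasDerivAt V (((t : ℂ))⁻¹ • D) 0 := by
    have hA : HasDerivAt (fun ζ => v ζ - a • 1) D 0 := hD.sub_const _
    have hB := hdiffB.hasDerivAt
    have := hA.mul hB
    simp only [hB0] at this
    simp only [h0, sub_self, zero_mul, add_zero] at this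
    rw [mul_smul_comm, mul_one] at this
    exact this
  -- Schwarz
  have hkey : ∀ ε : ℝ, 0 < ε → ‖((t : ℂ))⁻¹ • D‖ ≤ 1 + ε := by
    intro ε hε
    have hV0 : V 0 = 0 := by
      simp only [hV, h0, sub_self, zero_mul]
    have hmaps : MapsTo V (ball (0:ℂ) 1) (closedBall (V 0) (1 + ε)) := by
      intro ζ hζ
      rw [hV0, mem_closedBall, dist_zero_right]
      exact le_trans (hVb ζ hζ) (by linarith)
    have := Complex.norm_deriv_le_div_of_mapsTo_ball hVd hmaps one_pos
    rw [hVD.deriv] at this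
    simpa using this
  have h1 : ‖((t : ℂ))⁻¹ • D‖ ≤ 1 := by
    apply le_of_forall_pos_le_add
    intro ε hε; exact hkey ε hε
  have h2 : ‖((t : ℂ))⁻¹ • D‖ = t⁻¹ * ‖D‖ := by
    rw [norm_smul]
    congr 1
    rw [norm_inv]
    congr 1
    exact Complex.norm_real t ▸ by rw [Real.norm_eq_abs, abs_of_pos ht0]
  rw [h2] at h1
  calc ‖D‖ = t * (t⁻¹ * ‖D‖) := by field_simp
    _ ≤ t * 1 := by apply mul_le_mul_of_nonneg_left h1 ht0.le
    _ = 1 - ‖a‖ ^ 2 := by rw [mul_one, ht]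


lemma root_pow_k (k : ℕ) (hk : 1 ≤ k) :
    Complex.exp ((2 * Real.pi / k : ℝ) * Complex.I) ^ k = 1 := by
  rw [← Complex.exp_nat_mul]
  have e : (k:ℂ) * (((2 * Real.pi / k : ℝ) : ℂ) * Complex.I)
      = 2 * (Real.pi : ℂ) * Complex.I := by
    have hkc : ((k:ℂ)) ≠ 0 := Nat.cast_ne_zero.2 (by omega)
    push_cast
    field_simp
  rw [e, Complex.exp_two_pi_mul_I]

lemma root_pow_eq_one_iff (k : ℕ) (hk : 1 ≤ k) (m : ℕ) :
    Complex.exp ((2 * Real.pi / k : ℝ) * Complex.I) ^ m = 1 ↔ k ∣ m := by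
  constructor
  · intro h
    rw [← Complex.exp_nat_mul, Complex.exp_eq_one_iff] at h
    obtain ⟨j, hj⟩ := h
    have him := congrArg Complex.im hj
    simp [Complex.mul_im] at him
    have hπ : (0:ℝ) < Real.pi := Real.pi_pos
    have hkr : (0:ℝ) < (k:ℝ) := by exact_mod_cast (by omega : 0 < k)
    have hmr : (m:ℝ) = (j:ℝ) * (k:ℝ) := by
      field_simp at him
      nlinarith [him]
    have hmz : (m:ℤ) = j * k := by exact_mod_cast hmr
    have : (k:ℤ) ∣ (m:ℤ) := ⟨j, by linarith⟩
    exact_mod_cast this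
  · rintro ⟨d, rfl⟩
    rw [pow_mul, root_pow_k k hk, one_pow]

lemma coeff_bound {H : Type*} [NormedAddCommGroup H] [InnerProductSpace ℂ H]
    [CompleteSpace H] (T : ℕ → H →L[ℂ] H) (a : ℂ) (ha : ‖a‖ < 1) (hT0 : T 0 = a • 1)
    (hsum : ∀ ξ : ℂ, ‖ξ‖ ≤ 1 → ∃ F : H →L[ℂ] H, HasSum (fun m => ξ ^ m • T m) F ∧ ‖F‖ < 1)
    (k : ℕ) (hk : 1 ≤ k) : ‖T k‖ ≤ 1 - ‖a‖ ^ 2 := by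
  have hkc : ((k:ℂ)) ≠ 0 := Nat.cast_ne_zero.2 (by omega)
  have hkr : (0:ℝ) < (k:ℝ) := by exact_mod_cast (by omega : 0 < k)
  -- uniform bound on coefficients
  obtain ⟨F1, hF1, -⟩ := hsum 1 (by norm_num)
  have hTsummable : Summable T := by
    apply Summable.congr hF1.summable
    intro m; simp
  have htend : Filter.Tendsto (fun m => ‖T m‖) Filter.atTop (nhds 0) := by
    simpa using hTsummable.tendsto_atTop_zero.norm
  obtain ⟨C, hC⟩ := htend.bddAbove_range
  have hCb : ∀ m, ‖T m‖ ≤ C := fun m => hC (Set.mem_range_self m)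
  -- power series with coefficients T (m*k)
  set p : FormalMultilinearSeries ℂ ℂ (H →L[ℂ] H) :=
    fun m => ContinuousMultilinearMap.mkPiRing ℂ (Fin m) (T (m * k)) with hp
  have hpnorm : ∀ m, ‖p m‖ = ‖T (m * k)‖ := fun m =>
    ContinuousMultilinearMap.norm_mkPiRing _
  have hrad : 1 ≤ p.radius := by
    apply FormalMultilinearSeries.le_radius_of_bound _ C
    intro m
    rw [hpnorm]
    simpa using hCb (m * k)
  have hradpos : 0 < p.radius := lt_of_lt_of_le (by norm_num) hrad
  have hball : HasFPowerSeriesOnBall p.sum p 0 1 :=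
    (p.hasFPowerSeriesOnBall hradpos).mono (by norm_num) hrad
  set v := p.sum with hv
  have hvsum : ∀ ζ : ℂ, ‖ζ‖ < 1 → HasSum (fun m => ζ ^ m • T (m * k)) (v ζ) := by
    intro ζ hζ
    have hmem : ζ ∈ Metric.eball (0:ℂ) 1 := by
      rw [Metric.mem_eball, edist_zero_right, enorm_eq_nnnorm]
      exact_mod_cast hζ
    have h1 := hball.hasSum hmem
    rw [zero_add] at h1
    have e : (fun n => p n fun _ => ζ) = fun m => ζ ^ m • T (m * k) := by
      funext m
      simp [hp, ContinuousMultilinearMap.mkPiRing_apply]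
    rwa [e] at h1
  have hdiff : DifferentiableOn ℂ v (ball 0 1) := by
    apply hball.differentiableOn.mono
    intro ζ hζ
    rw [mem_ball, dist_zero_right] at hζ
    rw [EMetric.mem_ball, edist_zero_right, enorm_eq_nnnorm]
    exact_mod_cast hζ
  have hv0 : v 0 = a • 1 := by
    have h1 := hvsum 0 (by norm_num)
    have h2 : HasSum (fun m => (0:ℂ) ^ m • T (m * k)) ((0:ℂ) ^ 0 • T (0 * k)) :=
      hasSum_single 0 (fun m hm => by rw [zero_pow hm, zero_smul])
    have := h1.unique h2
    rw [this, ← hT0]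
    simp
  have hDeriv : HasDerivAt v (T k) 0 := by
    have h1 := hball.hasFPowerSeriesAt.hasDerivAt
    have e : p 1 (fun _ => (1:ℂ)) = T k := by
      simp [hp, ContinuousMultilinearMap.mkPiRing_apply]
    rwa [e] at h1
  -- norm bound via averaging over roots of unity
  have hvb : ∀ ζ ∈ ball (0:ℂ) 1, ‖v ζ‖ ≤ 1 := by
    intro ζ hζmem
    rw [mem_ball, dist_zero_right] at hζmem
    by_cases hζ0 : ζ = 0
    · subst hζ0
      rw [hv0]
      calc ‖a • (1 : H →L[ℂ] H)‖ = ‖a‖ * ‖(1 : H →L[ℂ] H)‖ := norm_smul _ _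
        _ ≤ ‖a‖ * 1 := mul_le_mul_of_nonneg_left ContinuousLinearMap.norm_id_le (norm_nonneg _)
        _ ≤ 1 := by rw [mul_one]; exact ha.le
    · -- choose a k-th root ξ of ζ
      set ξ : ℂ := Complex.exp (Complex.log ζ / k) with hξ
      have hξk : ξ ^ k = ζ := by
        rw [hξ, ← Complex.exp_nat_mul, mul_div_cancel₀ _ hkc, Complex.exp_log hζ0]
      have hξlt : ‖ξ‖ < 1 := by
        rw [hξ, Complex.norm_exp]
        apply Real.exp_lt_one_iff.2
        have e1 : (Complex.log ζ / (k:ℂ)).re = Real.log ‖ζ‖ / (k:ℝ) := by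
          rw [show ((k:ℂ)) = (((k:ℝ)):ℂ) by push_cast; ring, Complex.div_ofReal_re,
            Complex.log_re]
        rw [e1]
        apply div_neg_of_neg_of_pos _ hkr
        apply Real.log_neg (norm_pos_iff.2 hζ0)
        exact hζmem
      set ω : ℂ := Complex.exp ((2 * Real.pi / k : ℝ) * Complex.I) with hω
      have hωabs : ‖ω‖ = 1 := by
        rw [hω, Complex.norm_exp_ofReal_mul_I]
      have hωk : ω ^ k = 1 := root_pow_k k hk
      have hdvd : ∀ m : ℕ, ω ^ m = 1 ↔ k ∣ m := fun m => root_pow_eq_one_iff k hk m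
      have hsum' : ∀ j : Fin k, ∃ F, HasSum (fun m => (ω ^ (j:ℕ) * ξ) ^ m • T m) F ∧ ‖F‖ < 1 := by
        intro j
        apply hsum
        rw [norm_mul, norm_pow, hωabs, one_pow, one_mul]
        exact hξlt.le
      choose F hFs hFlt using hsum'
      set L := ((k:ℂ))⁻¹ • ∑ j : Fin k, F j with hL
      have hsum1 : HasSum (fun m => ((k:ℂ))⁻¹ • ∑ j : Fin k, (ω ^ (j:ℕ) * ξ) ^ m • T m) L :=
        (hasSum_sum (fun j _ => hFs j)).const_smul _
      have key : (fun m : ℕ => ((k:ℂ))⁻¹ • ∑ j : Fin k, (ω ^ (j:ℕ) * ξ) ^ m • T m)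
          = fun m => if k ∣ m then ξ ^ m • T m else 0 := by
        funext m
        have e1 : ∀ j : Fin k, (ω ^ (j:ℕ) * ξ) ^ m • T m = ((ω^m)^(j:ℕ)) • (ξ ^ m • T m) := by
          intro j
          rw [mul_pow, ← pow_mul, mul_comm (j:ℕ) m, pow_mul, smul_smul]
        rw [Finset.sum_congr rfl (fun j _ => e1 j), ← Finset.sum_smul]
        have e2 : ∑ j : Fin k, (ω^m)^(j:ℕ) = if k ∣ m then (k:ℂ) else 0 := by
          rw [Fin.sum_univ_eq_sum_range (fun j => (ω^m)^j) k]
          by_cases h : k ∣ m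
          · rw [if_pos h, (hdvd m).2 h]
            simp
          · rw [if_neg h]
            have hne : ω ^ m ≠ 1 := fun hh => h ((hdvd m).1 hh)
            rw [geom_sum_eq hne]
            have : (ω ^ m) ^ k = 1 := by
              rw [← pow_mul, mul_comm m k, pow_mul, hωk, one_pow]
            rw [this, sub_self, zero_div]
        rw [e2]
        by_cases h : k ∣ m
        · rw [if_pos h, if_pos h, smul_smul, inv_mul_cancel₀ hkc, one_smul]
        · rw [if_neg h, if_neg h, zero_smul, smul_zero]
      rw [key] at hsum1
      have hinj : Function.Injective (fun m : ℕ => m * k) := fun x y h => by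
        simpa [Nat.mul_left_inj (by omega : k ≠ 0)] using h
      have hsupp : ∀ x ∉ Set.range (fun m : ℕ => m * k),
          (if k ∣ x then ξ ^ x • T x else 0) = 0 := by
        intro x hx
        rw [if_neg]
        rintro ⟨d, hd⟩
        exact hx ⟨d, by simp [hd, Nat.mul_comm]⟩
      have hsum3 := (hinj.hasSum_iff hsupp).2 hsum1
      have hsum4 : HasSum (fun m => ζ ^ m • T (m * k)) L := by
        have e : ((fun x => if k ∣ x then ξ ^ x • T x else 0) ∘ (fun m => m * k))
            = fun m => ζ ^ m • T (m * k) := by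
          funext m
          simp only [Function.comp]
          rw [if_pos (dvd_mul_left k m)]
          congr 1
          rw [← hξk, ← pow_mul, mul_comm m k]
        rwa [e] at hsum3
      have hveq : v ζ = L := (hvsum ζ hζmem).unique hsum4
      rw [hveq, hL]
      have hFin : Nonempty (Fin k) := ⟨⟨0, by omega⟩⟩
      have hsumF : ‖∑ j : Fin k, F j‖ < (k:ℝ) := by
        calc ‖∑ j : Fin k, F j‖ ≤ ∑ j : Fin k, ‖F j‖ := norm_sum_le _ _
          _ < ∑ _j : Fin k, 1 := Finset.sum_lt_sum_of_nonempty Finset.univ_nonempty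
              (fun j _ => hFlt j)
          _ = (k:ℝ) := by simp
      calc ‖((k:ℂ))⁻¹ • ∑ j : Fin k, F j‖ = (k:ℝ)⁻¹ * ‖∑ j : Fin k, F j‖ := by
            rw [norm_smul, norm_inv]
            norm_num
        _ ≤ (k:ℝ)⁻¹ * (k:ℝ) := mul_le_mul_of_nonneg_left hsumF.le (by positivity)
        _ = 1 := inv_mul_cancel₀ hkr.ne'
  exact deriv_bound_of_ball v hdiff hvb a ha hv0 (T k) hDeriv


lemma homog_aux {E : Type*} [NormedAddCommGroup E] [NormedSpace ℂ E] {n : ℕ}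
    (A : (Fin n → ℕ) → E) (P : ℕ → (Fin n → ℂ) → E)
    (hP : ∀ (k : ℕ) (z : Fin n → ℂ),
      HasSum (fun α : {α : Fin n → ℕ // ∑ i, α i = k} =>
        (∏ i, z i ^ α.1 i) • A α.1) (P k z))
    (k : ℕ) (ξ : ℂ) (z : Fin n → ℂ) : P k (ξ • z) = ξ ^ k • P k z := by
  have h1 := hP k (ξ • z)
  have h2 := (hP k z).const_smul (ξ ^ k)
  have e : (fun α : {α : Fin n → ℕ // ∑ i, α i = k} => (∏ i, (ξ • z) i ^ α.1 i) • A α.1)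
      = fun α => ξ ^ k • ((∏ i, z i ^ α.1 i) • A α.1) := by
    funext α
    have e' : ∏ i, (ξ • z) i ^ α.1 i = ξ ^ k * ∏ i, z i ^ α.1 i := by
      simp only [Pi.smul_apply, smul_eq_mul, mul_pow, Finset.prod_mul_distrib]
      rw [Finset.prod_pow_eq_pow_sum, α.2]
    rw [e', mul_smul]
  rw [e] at h1
  exact h1.unique h2

lemma P_zero_aux {E : Type*} [NormedAddCommGroup E] [NormedSpace ℂ E] {n : ℕ}
    (A : (Fin n → ℕ) → E) (P : ℕ → (Fin n → ℂ) → E)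
    (hP : ∀ (k : ℕ) (z : Fin n → ℂ),
      HasSum (fun α : {α : Fin n → ℕ // ∑ i, α i = k} =>
        (∏ i, z i ^ α.1 i) • A α.1) (P k z))
    (z : Fin n → ℂ) : P 0 z = P 0 0 := by
  have key : ∀ y : Fin n → ℂ,
      (fun α : {α : Fin n → ℕ // ∑ i, α i = 0} => (∏ i, y i ^ α.1 i) • A α.1)
      = fun α => A α.1 := by
    intro y
    funext α
    have hα : ∀ i, α.1 i = 0 := by
      intro i
      have := α.2
      exact (Finset.sum_eq_zero_iff.1 this) i (Finset.mem_univ i)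
    have : ∏ i, y i ^ α.1 i = 1 := by
      apply Finset.prod_eq_one
      intro i _
      rw [hα i, pow_zero]
    rw [this, one_smul]
  have h1 := hP 0 z
  have h2 := hP 0 0
  rw [key z] at h1
  rw [key 0] at h2
  exact h1.unique h2
end Aux

/-- Multidimensional improved operator valued Bohr inequality with a polynomial `G`:
on a complete circular domain `Q`, if `f = ∑ₖ Pₖ` with `‖f‖ < 1`, `f(0) = a₀ I`,
`|a₀| < 1`, and `∑ₖ k‖Pₖ(z)‖²` converges on `Q`, and `G(x) = ∑_{m=1}^l c_m x^m` has
nonnegative coefficients with `∑_{m=1}^l 8(2m-1) c_m (3/8)^{2m} ≤ 1`, then for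
`r ∈ [0,1/3]` and `w ∈ Q`, the point `z = r·w` satisfies
`∑ₖ ‖Pₖ(z)‖ + G(∑ₖ k‖Pₖ(z)‖²) ≤ 1`. -/

theorem bohr_multidim_improved_polynomial
    {H : Type*} [NormedAddCommGroup H] [InnerProductSpace ℂ H] [CompleteSpace H]
    {n : ℕ} (Q : Set (Fin n → ℂ))
    (hQopen : IsOpen Q) (hQconn : IsConnected Q) (hQ0 : (0 : Fin n → ℂ) ∈ Q)
    (hQcirc : ∀ z ∈ Q, ∀ ξ : ℂ, ‖ξ‖ ≤ 1 → ξ • z ∈ Q)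
    (f : (Fin n → ℂ) → (H →L[ℂ] H))
    (P : ℕ → (Fin n → ℂ) → (H →L[ℂ] H))
    (A : (Fin n → ℕ) → (H →L[ℂ] H))
    (hP : ∀ (k : ℕ) (z : Fin n → ℂ),
      HasSum (fun α : {α : Fin n → ℕ // ∑ i, α i = k} =>
        (∏ i, z i ^ α.1 i) • A α.1) (P k z))
    (hexp : ∀ z ∈ Q, HasSum (fun k => P k z) (f z))
    (hlt : ∀ z ∈ Q, ‖f z‖ < 1)
    (a₀ : ℂ) (ha₀ : ‖a₀‖ < 1)
    (hf0 : f 0 = a₀ • (1 : H →L[ℂ] H))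
    (hS : ∀ z ∈ Q, Summable (fun k : ℕ => (k : ℝ) * ‖P k z‖ ^ 2))
    (l : ℕ) (hl : 1 ≤ l) (c : ℕ → ℝ) (hc : ∀ m ∈ Finset.Icc 1 l, 0 ≤ c m)
    (hcsum : ∑ m ∈ Finset.Icc 1 l,
      8 * (2 * (m : ℝ) - 1) * c m * (3 / 8 : ℝ) ^ (2 * m) ≤ 1)
    (w : Fin n → ℂ) (hw : w ∈ Q)
    (r : ℝ) (hr0 : 0 ≤ r) (hr : r ≤ 1 / 3) :
    Summable (fun k => ‖P k ((r : ℂ) • w)‖) ∧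
    Summable (fun k : ℕ => (k : ℝ) * ‖P k ((r : ℂ) • w)‖ ^ 2) ∧
    ∑' k, ‖P k ((r : ℂ) • w)‖ +
        ∑ m ∈ Finset.Icc 1 l,
          c m * (∑' k : ℕ, (k : ℝ) * ‖P k ((r : ℂ) • w)‖ ^ 2) ^ m ≤ 1 := by
  have homog := homog_aux A P hP
  have hPk0 : ∀ k : ℕ, k ≠ 0 → P k 0 = 0 := by
    intro k hk
    have h := homog k 0 0
    rw [smul_zero] at h
    rw [h, zero_pow hk, zero_smul]
  have hP00 : P 0 0 = a₀ • 1 := by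
    have h1 := hexp 0 hQ0
    have h2 : HasSum (fun k => P k 0) (P 0 0) := hasSum_single 0 (fun k hk => hPk0 k hk)
    rw [h2.unique h1, hf0]
  have hP0 : ∀ z, P 0 z = a₀ • 1 := fun z => (P_zero_aux A P hP z).trans hP00
  have hcoeff : ∀ k : ℕ, 1 ≤ k → ‖P k w‖ ≤ 1 - ‖a₀‖ ^ 2 := by
    intro k hk
    apply coeff_bound (fun k => P k w) a₀ ha₀ (hP0 w) _ k hk
    intro ξ hξ
    refine ⟨f (ξ • w), ?_, hlt _ (hQcirc w hw ξ hξ)⟩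
    have h1 := hexp (ξ • w) (hQcirc w hw ξ hξ)
    have e : (fun m => P m (ξ • w)) = fun m => ξ ^ m • P m w := by
      funext m; exact homog m ξ w
    rwa [e] at h1
  set a := ‖a₀‖ with haa'
  have ha1 : a < 1 := ha₀
  have ha0' : (0:ℝ) ≤ a := norm_nonneg _
  have haa : (0:ℝ) ≤ 1 - a ^ 2 := by nlinarith
  -- pointwise norm bounds
  have hnorm0 : ‖P 0 ((r:ℂ) • w)‖ ≤ a := by
    rw [hP0]
    calc ‖a₀ • (1 : H →L[ℂ] H)‖ = ‖a₀‖ * ‖(1 : H →L[ℂ] H)‖ := norm_smul _ _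
      _ ≤ ‖a₀‖ * 1 := mul_le_mul_of_nonneg_left ContinuousLinearMap.norm_id_le (norm_nonneg _)
      _ = a := mul_one _
  have hnormk : ∀ k : ℕ, 1 ≤ k → ‖P k ((r:ℂ) • w)‖ ≤ (1 - a ^ 2) * (1/3:ℝ) ^ k := by
    intro k hk
    rw [homog k ((r:ℂ)) w, norm_smul, norm_pow]
    have e : ‖((r:ℝ):ℂ)‖ = r := by
      rw [Complex.norm_real, Real.norm_eq_abs, abs_of_nonneg hr0]
    rw [e]
    calc r ^ k * ‖P k w‖ ≤ (1/3:ℝ) ^ k * (1 - a ^ 2) :=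
          mul_le_mul (pow_le_pow_left₀ hr0 hr k) (hcoeff k hk) (norm_nonneg _) (by positivity)
      _ = (1 - a ^ 2) * (1/3:ℝ) ^ k := mul_comm _ _
  set u : ℕ → ℝ := fun k => if k = 0 then a else (1 - a ^ 2) * (1/3:ℝ) ^ k with hu'
  have hu : ∀ k, ‖P k ((r:ℂ) • w)‖ ≤ u k := by
    intro k
    cases k with
    | zero => simpa [hu'] using hnorm0
    | succ j =>
      have := hnormk (j+1) (by omega)
      simpa [hu'] using this
  have hu_nonneg : ∀ k, 0 ≤ u k := by
    intro k
    cases k with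
    | zero => simpa [hu'] using ha0'
    | succ j =>
      show (0:ℝ) ≤ if j + 1 = 0 then a else (1 - a ^ 2) * (1/3:ℝ) ^ (j+1)
      rw [if_neg (Nat.succ_ne_zero j)]
      positivity
  have hgeom13 : Summable (fun k : ℕ => (1/3:ℝ) ^ k) :=
    summable_geometric_of_lt_one (by norm_num) (by norm_num)
  have hu_le : ∀ k, u k ≤ max a (1 - a ^ 2) * (1/3:ℝ) ^ k := by
    intro k
    cases k with
    | zero => simp [hu', le_max_left]
    | succ j =>
      show (if j + 1 = 0 then a else (1 - a ^ 2) * (1/3:ℝ) ^ (j+1)) ≤ _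
      rw [if_neg (Nat.succ_ne_zero j)]
      apply mul_le_mul_of_nonneg_right (le_max_right _ _) (by positivity)
  have hu_summable : Summable u :=
    Summable.of_nonneg_of_le hu_nonneg hu_le (hgeom13.mul_left _)
  have hsum_u : ∑' k, u k = a + (1 - a ^ 2) * (1/2:ℝ) := by
    rw [Summable.tsum_eq_zero_add hu_summable]
    have e0 : u 0 = a := by simp [hu']
    have e1 : ∀ j : ℕ, u (j+1) = ((1 - a ^ 2) * (1/3:ℝ)) * (1/3:ℝ) ^ j := by
      intro j
      show (if j + 1 = 0 then a else (1 - a ^ 2) * (1/3:ℝ) ^ (j+1)) = _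
      rw [if_neg (Nat.succ_ne_zero j)]
      ring
    rw [e0]
    congr 1
    rw [tsum_congr e1, tsum_mul_left, tsum_geometric_of_lt_one (by norm_num) (by norm_num)]
    norm_num
    ring
  have hsummable1 : Summable (fun k => ‖P k ((r:ℂ) • w)‖) :=
    Summable.of_nonneg_of_le (fun k => norm_nonneg _) hu hu_summable
  have htsum1 : ∑' k : ℕ, ‖P k ((r:ℂ) • w)‖ ≤ a + (1 - a ^ 2) * (1/2:ℝ) := by
    rw [← hsum_u]
    exact Summable.tsum_le_tsum hu hsummable1 hu_summable
  -- second series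
  have hgeom9 : Summable (fun k : ℕ => (k:ℝ) * (1/9:ℝ) ^ k) :=
    (hasSum_coe_mul_geometric_of_norm_lt_one (r := (1/9:ℝ))
      (by rw [Real.norm_eq_abs, abs_of_nonneg (by norm_num : (0:ℝ) ≤ 1/9)]; norm_num)).summable
  have hsq : ∀ k : ℕ, (k:ℝ) * ‖P k ((r:ℂ) • w)‖ ^ 2
      ≤ (1 - a ^ 2) ^ 2 * ((k:ℝ) * (1/9:ℝ) ^ k) := by
    intro k
    cases k with
    | zero => simp
    | succ j =>
      have hb := hnormk (j+1) (by omega)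
      have hsq' : ‖P (j+1) ((r:ℂ) • w)‖ ^ 2 ≤ ((1 - a ^ 2) * (1/3:ℝ) ^ (j+1)) ^ 2 :=
        pow_le_pow_left₀ (norm_nonneg _) hb 2
      have e : (((1/3:ℝ)) ^ (j+1)) ^ 2 = (1/9:ℝ) ^ (j+1) := by
        rw [← pow_mul, mul_comm (j+1) 2, pow_mul]
        norm_num
      calc ((j+1:ℕ):ℝ) * ‖P (j+1) ((r:ℂ) • w)‖ ^ 2
          ≤ ((j+1:ℕ):ℝ) * ((1 - a ^ 2) * (1/3:ℝ) ^ (j+1)) ^ 2 :=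
            mul_le_mul_of_nonneg_left hsq' (Nat.cast_nonneg _)
        _ = (1 - a ^ 2) ^ 2 * (((j+1:ℕ):ℝ) * (1/9:ℝ) ^ (j+1)) := by
            rw [mul_pow, e]; ring
  have hsummable2 : Summable (fun k : ℕ => (k:ℝ) * ‖P k ((r:ℂ) • w)‖ ^ 2) :=
    Summable.of_nonneg_of_le (fun k => by positivity) hsq (hgeom9.mul_left _)
  have htsum2 : ∑' k : ℕ, (k:ℝ) * ‖P k ((r:ℂ) • w)‖ ^ 2 ≤ (1 - a ^ 2) ^ 2 * (9/64:ℝ) := by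
    calc ∑' k : ℕ, (k:ℝ) * ‖P k ((r:ℂ) • w)‖ ^ 2
        ≤ ∑' k : ℕ, (1 - a ^ 2) ^ 2 * ((k:ℝ) * (1/9:ℝ) ^ k) :=
          Summable.tsum_le_tsum hsq hsummable2 (hgeom9.mul_left _)
      _ = (1 - a ^ 2) ^ 2 * ∑' k : ℕ, ((k:ℝ) * (1/9:ℝ) ^ k) := tsum_mul_left
      _ = (1 - a ^ 2) ^ 2 * (9/64:ℝ) := by
          rw [(hasSum_coe_mul_geometric_of_norm_lt_one (r := (1/9:ℝ))
            (by rw [Real.norm_eq_abs, abs_of_nonneg (by norm_num : (0:ℝ) ≤ 1/9)]; norm_num)).tsum_eq]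
          norm_num
  refine ⟨hsummable1, hsummable2, ?_⟩
  set S := ∑' k : ℕ, (k:ℝ) * ‖P k ((r:ℂ) • w)‖ ^ 2 with hS'
  have hS0 : 0 ≤ S := tsum_nonneg (fun k => by positivity)
  have hpoly : ∑ m ∈ Finset.Icc 1 l, c m * S ^ m ≤ (1 - a) ^ 2 / 2 := by
    calc ∑ m ∈ Finset.Icc 1 l, c m * S ^ m
        ≤ ∑ m ∈ Finset.Icc 1 l,
            (8 * (2 * (m:ℝ) - 1) * c m * (3/8:ℝ) ^ (2*m)) * ((1 - a) ^ 2 / 2) := by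
          apply Finset.sum_le_sum
          intro m hm
          obtain ⟨hm1, hm2⟩ := Finset.mem_Icc.1 hm
          have hSm : S ^ m ≤ ((1 - a ^ 2) ^ 2 * (9/64:ℝ)) ^ m :=
            pow_le_pow_left₀ hS0 htsum2 m
          have e1 : ((1 - a ^ 2) ^ 2 * (9/64:ℝ)) ^ m
              = (1 - a ^ 2) ^ (2*m) * (3/8:ℝ) ^ (2*m) := by
            rw [mul_pow, ← pow_mul]
            congr 1
            rw [pow_mul]
            norm_num
          have e2 : (1 - a ^ 2:ℝ) ^ (2*m) ≤ 4 * (2 * (m:ℝ) - 1) * (1 - a) ^ 2 := by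
            have h2m : 2*m = 2*(m-1) + 2 := by omega
            have hb1 : (1 - a ^ 2:ℝ) ^ (2*(m-1)) ≤ 1 := pow_le_one₀ haa (by nlinarith)
            have hsplit : (1 - a ^ 2:ℝ) ^ (2*m) = (1 - a ^ 2) ^ (2*(m-1)) * (1 - a ^ 2) ^ 2 := by
              rw [h2m, pow_add]
            have h4 : (1 - a ^ 2:ℝ) ^ 2 ≤ 4 * (1 - a) ^ 2 := by nlinarith
            have hm' : (1:ℝ) ≤ (m:ℝ) := by exact_mod_cast hm1
            have hnn : (0:ℝ) ≤ (1 - a ^ 2) ^ (2*(m-1)) := pow_nonneg haa _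
            have step1 : (1 - a ^ 2:ℝ) ^ (2*m) ≤ 4 * (1 - a) ^ 2 := by
              rw [hsplit]
              calc (1 - a ^ 2:ℝ) ^ (2*(m-1)) * (1 - a ^ 2) ^ 2
                  ≤ 1 * (4 * (1 - a) ^ 2) :=
                    mul_le_mul hb1 h4 (by positivity) (by norm_num)
                _ = 4 * (1 - a) ^ 2 := one_mul _
            nlinarith [sq_nonneg (1 - a), step1, hm']
          calc c m * S ^ m ≤ c m * ((1 - a ^ 2) ^ (2*m) * (3/8:ℝ) ^ (2*m)) := by
                apply mul_le_mul_of_nonneg_left _ (hc m hm)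
                rw [← e1]; exact hSm
            _ ≤ c m * ((4 * (2 * (m:ℝ) - 1) * (1 - a) ^ 2) * (3/8:ℝ) ^ (2*m)) := by
                apply mul_le_mul_of_nonneg_left _ (hc m hm)
                exact mul_le_mul_of_nonneg_right e2 (by positivity)
            _ = (8 * (2 * (m:ℝ) - 1) * c m * (3/8:ℝ) ^ (2*m)) * ((1 - a) ^ 2 / 2) := by
                ring
      _ = (∑ m ∈ Finset.Icc 1 l, 8 * (2 * (m:ℝ) - 1) * c m * (3/8:ℝ) ^ (2*m))
          * ((1 - a) ^ 2 / 2) := (Finset.sum_mul _ _ _).symm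
      _ ≤ 1 * ((1 - a) ^ 2 / 2) := mul_le_mul_of_nonneg_right hcsum (by positivity)
      _ = (1 - a) ^ 2 / 2 := one_mul _
  have hfinal : a + (1 - a ^ 2) * (1/2:ℝ) + (1 - a) ^ 2 / 2 = 1 := by ring
  linarith [htsum1, hpoly]
end

section
/- For every complex Hilbert space H and every r with 1/√2 < r < 1, there exists an analytic function f : 𝔻 → 𝓑(H) with power series expansion f(z) = ∑_{k=1}^∞ A_k z^k (A_k ∈ 𝓑(H)) satisfying ‖f(z)‖ ≤ 1 for all z ∈ 𝔻 and f(0) = 0, such that ∑_{k=1}^∞ ‖A_k‖ r^k > 1. In fact, the function h(ξ) = ξ · ((1/√2 − ξ)/(1 − ξ/√2)) · I has this property; i.e., the radius 1/√2 in the Bohr inequality for operator valued functions vanishing at the origin is best possible. -/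
noncomputable def bohrC : ℕ → ℂ
  | 0 => 0
  | 1 => ((Real.sqrt 2 : ℂ))⁻¹
  | (k+2) => -(1/2) * ((Real.sqrt 2 : ℂ))⁻¹ ^ k

lemma sqrt2_sq : ((Real.sqrt 2 : ℝ) : ℂ) ^ 2 = 2 := by
  norm_cast
  rw [sq]
  exact Real.mul_self_sqrt (by norm_num)

lemma bohrC_hasSum {z : ℂ} (hz : ‖z‖ < 1) :
    HasSum (fun k => z ^ k * bohrC k)
      (z * (((Real.sqrt 2 : ℂ))⁻¹ - z) / (1 - z * ((Real.sqrt 2 : ℂ))⁻¹)) := by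
  set a : ℂ := ((Real.sqrt 2 : ℂ))⁻¹ with ha
  have ha2 : a ^ 2 = 1/2 := by
    rw [ha, inv_pow, sqrt2_sq]
    norm_num
  have haR : ‖a‖ < 1 := by
    rw [ha, norm_inv, Complex.norm_real, Real.norm_eq_abs,
      abs_of_pos (Real.sqrt_pos.mpr (by norm_num))]
    have h1 : (1:ℝ) < Real.sqrt 2 := by
      nlinarith [Real.sq_sqrt (by norm_num : (0:ℝ) ≤ 2), Real.sqrt_nonneg 2]
    rw [inv_lt_one_iff₀]
    exact Or.inr h1
  have hza : ‖z * a‖ < 1 := by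
    rw [norm_mul]
    calc ‖z‖ * ‖a‖ ≤ 1 * ‖a‖ := by gcongr
    _ < 1 := by simpa using haR
  have hne : (1 : ℂ) - z * a ≠ 0 := by
    intro h
    have : z * a = 1 := by linear_combination -h
    rw [this] at hza
    simp at hza
  have hg : HasSum (fun k => (z * a) ^ k) (1 - z * a)⁻¹ :=
    hasSum_geometric_of_norm_lt_one hza
  have h2 : HasSum (fun k => z ^ (k + 2) * bohrC (k + 2)) (-(1/2) * z^2 * (1 - z*a)⁻¹) := by
    have h := hg.mul_left (-(1/2) * z^2)
    have he : (fun k => z ^ (k + 2) * bohrC (k + 2)) = fun k => -(1/2) * z^2 * (z*a)^k := by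
      funext k
      have hb : bohrC (k + 2) = -(1/2) * a ^ k := rfl
      rw [hb, mul_pow]
      ring
    rw [he]
    exact h
  have h3 := (hasSum_nat_add_iff (f := fun k => z ^ k * bohrC k) 2).mp h2
  have hsum2 : ∑ i ∈ Finset.range 2, z ^ i * bohrC i = z * a := by
    rw [Finset.sum_range_succ, Finset.sum_range_one]
    have h0 : bohrC 0 = 0 := rfl
    have h1 : bohrC 1 = a := rfl
    rw [h0, h1]; ring
  rw [hsum2] at h3
  have hval : -(1/2) * z^2 * (1 - z*a)⁻¹ + z * a = z * (a - z) / (1 - z*a) := by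
    field_simp
    linear_combination (-2*z^2) * ha2
  rw [hval] at h3
  exact h3

lemma bohrR_hasSum {r : ℝ} (hr0 : (Real.sqrt 2)⁻¹ < r) (hr2 : r < 1) :
    HasSum (fun k => ‖bohrC k‖ * r ^ k)
      ((Real.sqrt 2)⁻¹ * r + r ^ 2 / 2 * (1 - (Real.sqrt 2)⁻¹ * r)⁻¹) := by
  set aR : ℝ := (Real.sqrt 2)⁻¹ with haR
  have hs2 : (0:ℝ) < Real.sqrt 2 := Real.sqrt_pos.mpr (by norm_num)
  have haRpos : 0 < aR := haR ▸ inv_pos.mpr hs2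
  have haRr : aR * r < 1 := by
    have h1 : (1:ℝ) < Real.sqrt 2 := by
      nlinarith [Real.sq_sqrt (by norm_num : (0:ℝ) ≤ 2), Real.sqrt_nonneg 2]
    have : aR < 1 := by rw [haR, inv_lt_one_iff₀]; exact Or.inr h1
    nlinarith [haRpos.trans hr0]
  have haRr0 : 0 ≤ aR * r := le_of_lt (mul_pos haRpos (haRpos.trans hr0))
  have hnorm : ∀ k, ‖bohrC (k + 2)‖ = 1/2 * aR ^ k := by
    intro k
    have hb : bohrC (k + 2) = -(1/2) * ((Real.sqrt 2 : ℂ))⁻¹ ^ k := rfl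
    rw [hb, norm_mul, norm_pow, norm_inv, Complex.norm_real, Real.norm_eq_abs,
      abs_of_pos hs2, haR, inv_pow]
    norm_num
  have hg : HasSum (fun k => (aR * r) ^ k) (1 - aR * r)⁻¹ :=
    hasSum_geometric_of_lt_one haRr0 haRr
  have h2 : HasSum (fun k => ‖bohrC (k + 2)‖ * r ^ (k + 2)) (r ^ 2 / 2 * (1 - aR * r)⁻¹) := by
    have h := hg.mul_left (r ^ 2 / 2)
    have he : (fun k => ‖bohrC (k + 2)‖ * r ^ (k + 2)) =
        fun k => r ^ 2 / 2 * (aR * r) ^ k := by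
      funext k
      rw [hnorm k, mul_pow, pow_add]
      ring
    rw [he]
    exact h
  have h3 := (hasSum_nat_add_iff (f := fun k => ‖bohrC k‖ * r ^ k) 2).mp h2
  have hsum2 : ∑ i ∈ Finset.range 2, ‖bohrC i‖ * r ^ i = aR * r := by
    rw [Finset.sum_range_succ, Finset.sum_range_one]
    have h0 : bohrC 0 = 0 := rfl
    have h1 : bohrC 1 = ((Real.sqrt 2 : ℂ))⁻¹ := rfl
    rw [h0, h1, norm_zero, norm_inv, Complex.norm_real, Real.norm_eq_abs, abs_of_pos hs2]
    ring
  rw [hsum2] at h3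
  have : r ^ 2 / 2 * (1 - aR * r)⁻¹ + aR * r = aR * r + r ^ 2 / 2 * (1 - aR * r)⁻¹ := by ring
  rw [this] at h3
  exact h3

/-- Sharpness of the radius `1/√2` in the operator valued Bohr inequality for functions
vanishing at the origin: for every `r ∈ (1/√2, 1)` the function
`h(ξ) = ξ ((1/√2 - ξ)/(1 - ξ/√2)) I` is analytic, bounded by `1`, vanishes at `0`,
and its majorant series at `r` exceeds `1`. -/
theorem bohr_vanishing_at_zero_sharpness
    {H : Type*} [NormedAddCommGroup H] [InnerProductSpace ℂ H] [CompleteSpace H]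
    [Nontrivial H]
    (r : ℝ) (hr1 : (Real.sqrt 2)⁻¹ < r) (hr2 : r < 1) :
    ∃ (f : ℂ → (H →L[ℂ] H)) (A : ℕ → (H →L[ℂ] H)),
      (∀ z ∈ Metric.ball (0 : ℂ) 1, HasSum (fun k => z ^ k • A k) (f z)) ∧
      (∀ z ∈ Metric.ball (0 : ℂ) 1, ‖f z‖ ≤ 1) ∧
      f 0 = 0 ∧ A 0 = 0 ∧
      (∀ ξ ∈ Metric.ball (0 : ℂ) 1,
        f ξ = (ξ * (((Real.sqrt 2 : ℂ))⁻¹ - ξ) / (1 - ξ * ((Real.sqrt 2 : ℂ))⁻¹)) •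
          (1 : H →L[ℂ] H)) ∧
      Summable (fun k => ‖A k‖ * r ^ k) ∧
      1 < ∑' k, ‖A k‖ * r ^ k := by
  have hs2 : (0:ℝ) < Real.sqrt 2 := Real.sqrt_pos.mpr (by norm_num)
  have hsq : Real.sqrt 2 * Real.sqrt 2 = 2 := Real.mul_self_sqrt (by norm_num)
  set aR : ℝ := (Real.sqrt 2)⁻¹ with haRdef
  have haRsq : aR ^ 2 = 1/2 := by
    rw [haRdef]
    rw [sq, ← mul_inv, hsq]
    norm_num
  have haRpos : 0 < aR := by positivity
  have haR1 : aR < 1 := by nlinarith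
  refine ⟨fun ξ => (ξ * (((Real.sqrt 2 : ℂ))⁻¹ - ξ) / (1 - ξ * ((Real.sqrt 2 : ℂ))⁻¹)) •
      (1 : H →L[ℂ] H), fun k => bohrC k • (1 : H →L[ℂ] H), ?_, ?_, ?_, ?_, ?_, ?_, ?_⟩
  · intro z hz
    rw [Metric.mem_ball, dist_zero_right] at hz
    have h := (bohrC_hasSum hz).smul_const (1 : H →L[ℂ] H)
    have he : (fun k => z ^ k • (bohrC k • (1 : H →L[ℂ] H))) =
        fun k => (z ^ k * bohrC k) • (1 : H →L[ℂ] H) := by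
      funext k; rw [smul_smul]
    rw [he]
    exact h
  · intro z hz
    rw [Metric.mem_ball, dist_zero_right] at hz
    rw [norm_smul, ContinuousLinearMap.one_def, ContinuousLinearMap.norm_id, mul_one]
    have hcoe : (((Real.sqrt 2 : ℂ)))⁻¹ = ((aR : ℝ) : ℂ) := by
      rw [haRdef, Complex.ofReal_inv]
    have hz2 : z.re ^ 2 + z.im ^ 2 < 1 := by
      have h1 : ‖z‖ ^ 2 < 1 := by nlinarith [norm_nonneg z]
      have h2 : ‖z‖ ^ 2 = z.re ^ 2 + z.im ^ 2 := by
        rw [Complex.sq_norm, Complex.normSq_apply]; ring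
      linarith [h2 ▸ h1]
    have e1 : ‖((aR:ℂ) - z)‖ ^ 2 = (aR - z.re) ^ 2 + z.im ^ 2 := by
      rw [Complex.sq_norm, Complex.normSq_apply]
      simp [Complex.sub_re, Complex.sub_im]
      ring
    have e2 : ‖(1 - z * (aR:ℂ))‖ ^ 2 = (1 - z.re * aR) ^ 2 + (z.im * aR) ^ 2 := by
      rw [Complex.sq_norm, Complex.normSq_apply]
      simp [Complex.sub_re, Complex.sub_im, Complex.mul_re, Complex.mul_im]
      ring
    have hkey : ‖(aR:ℂ) - z‖ ≤ ‖1 - z * (aR:ℂ)‖ := by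
      have hsq2 : ‖((aR:ℂ) - z)‖ ^ 2 ≤ ‖(1 - z * (aR:ℂ))‖ ^ 2 := by
        rw [e1, e2]; nlinarith [haRsq, hz2]
      nlinarith [norm_nonneg ((aR:ℂ) - z), norm_nonneg (1 - z * (aR:ℂ))]
    have hden0 : 0 < ‖(1 - z * (aR:ℂ))‖ := by
      rw [norm_pos_iff]
      intro h
      have hz1 : z * (aR:ℂ) = 1 := by linear_combination -h
      have : ‖z * (aR:ℂ)‖ < 1 := by
        rw [norm_mul, Complex.norm_real, Real.norm_eq_abs, abs_of_pos haRpos]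
        nlinarith [norm_nonneg z]
      rw [hz1] at this
      simp at this
    rw [hcoe, norm_div, norm_mul, div_le_one hden0]
    calc ‖z‖ * ‖(aR:ℂ) - z‖ ≤ 1 * ‖(aR:ℂ) - z‖ := by gcongr
      _ ≤ ‖1 - z * (aR:ℂ)‖ := by rw [one_mul]; exact hkey
  · simp
  · show bohrC 0 • (1 : H →L[ℂ] H) = 0
    have h0 : bohrC 0 = (0:ℂ) := rfl
    rw [h0]
    exact zero_smul ℂ _
  · intro ξ _; rfl
  · have h := bohrR_hasSum hr1 hr2
    have he : (fun k => ‖bohrC k • (1 : H →L[ℂ] H)‖ * r ^ k) =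
        fun k => ‖bohrC k‖ * r ^ k := by
      funext k
      rw [norm_smul, ContinuousLinearMap.one_def, ContinuousLinearMap.norm_id, mul_one]
    rw [he]
    exact h.summable
  · have h := bohrR_hasSum hr1 hr2
    have he : (fun k => ‖bohrC k • (1 : H →L[ℂ] H)‖ * r ^ k) =
        fun k => ‖bohrC k‖ * r ^ k := by
      funext k
      rw [norm_smul, ContinuousLinearMap.one_def, ContinuousLinearMap.norm_id, mul_one]
    rw [he, h.tsum_eq]
    have hden : 0 < 1 - aR * r := by nlinarith
    have hinv : (1 - aR * r) * (1 - aR * r)⁻¹ = 1 := mul_inv_cancel₀ (ne_of_gt hden)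
    rw [← sub_pos]
    have hkey : (1 - aR * r) * (aR * r + r ^ 2 / 2 * (1 - aR * r)⁻¹ - 1) =
        (1 - aR * r) * (aR * r - 1) + r ^ 2 / 2 := by
      field_simp
      ring
    have hpos : 0 < (1 - aR * r) * (aR * r - 1) + r ^ 2 / 2 := by nlinarith
    nlinarith
end

section
/- Let H be a complex Hilbert space, N ≥ 1 an integer, p ∈ (0,1], and let R_{N,p} be the unique root in (0,1) of 2(1+r)r^N − p(1−r)² = 0. Then for every r with R_{N,p} < r < 1 there exist an analytic function f : 𝔻 → 𝓑(H) with power series expansion f(z) = ∑_{k=0}^∞ A_k z^k, ‖f(z)‖ ≤ 1 for all z ∈ 𝔻 and A₀ = a₀·I for some a₀ ∈ ℂ with |a₀| < 1, and a point z ∈ 𝔻 with |z| = r, such that ‖f(z)‖^p + ∑_{k=N}^∞ ‖A_k‖ r^k > 1. In fact, for a < 1 sufficiently close to 1 the function ψ_a(z) = ((a−z)/(1−az))·I evaluated at z = −r has this property; i.e., the radius R_{N,p} is best possible. -/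
open Filter Set Topology

lemma key_scalar (N : ℕ) (hN : 1 ≤ N) (p : ℝ) (hp0 : 0 < p)
    (R : ℝ) (hR0 : 0 < R) (hR1 : R < 1)
    (hroot : 2 * (1 + R) * R ^ N = p * (1 - R) ^ 2)
    (r : ℝ) (hr1 : R < r) (hr2 : r < 1) :
    ∃ a : ℝ, 0 < a ∧ a < 1 ∧
      1 < ((a + r) / (1 + a * r)) ^ p + (1 - a ^ 2) * a ^ (N - 1) * r ^ N / (1 - a * r) := by
  have hr0 : 0 < r := hR0.trans hr1
  set F : ℝ → ℝ := fun a => ((a + r) / (1 + a * r)) ^ p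
    + (1 - a ^ 2) * a ^ (N - 1) * r ^ N / (1 - a * r) with hF
  -- derivative at a = 1
  have hden1 : (1 : ℝ) + 1 * r ≠ 0 := by nlinarith
  have hden2 : (1 : ℝ) - 1 * r ≠ 0 := by nlinarith
  have hu : HasDerivAt (fun a : ℝ => (a + r) / (1 + a * r))
      ((1 * (1 + 1 * r) - (1 + r) * r) / (1 + 1 * r) ^ 2) 1 := by
    have := ((hasDerivAt_id 1).add_const r).div (((hasDerivAt_id 1).mul_const r).const_add 1) hden1
    refine this.congr_deriv (Eq.symm ?_) <;> simp
  have hu1 : ((1 : ℝ) + r) / (1 + 1 * r) = 1 := by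
    field_simp
  have hv : HasDerivAt (fun a : ℝ => ((a + r) / (1 + a * r)) ^ p)
      (p * (1 - r) / (1 + r)) 1 := by
    have := hu.rpow_const (p := p) (by left; rw [hu1]; norm_num)
    convert this using 1
    rw [hu1]
    rw [Real.one_rpow]
    field_simp
  have hn : HasDerivAt (fun a : ℝ => (1 - a ^ 2) * a ^ (N - 1) * r ^ N)
      (-2 * r ^ N) 1 := by
    have h1 : HasDerivAt (fun a : ℝ => 1 - a ^ 2) (-(2 * 1 ^ 1)) 1 :=
      ((hasDerivAt_pow 2 1).const_sub 1).congr_deriv (by push_cast; ring)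
    have h2 := hasDerivAt_pow (N - 1) (1 : ℝ)
    have := (h1.mul h2).mul_const (r ^ N)
    refine this.congr_deriv (Eq.symm ?_)
    simp
  have hd : HasDerivAt (fun a : ℝ => 1 - a * r) (-(1 * r)) 1 :=
    ((hasDerivAt_id 1).mul_const r).const_sub 1
  have hh : HasDerivAt (fun a : ℝ => (1 - a ^ 2) * a ^ (N - 1) * r ^ N / (1 - a * r))
      (-2 * r ^ N / (1 - r)) 1 := by
    have := hn.div hd hden2
    refine this.congr_deriv (Eq.symm ?_)
    have h3 : (1:ℝ) - r * 2 + r ^ 2 ≠ 0 := by nlinarith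
    have h4 : (1:ℝ) - r ≠ 0 := by nlinarith
    field_simp
    ring
  have hder : HasDerivAt F (p * (1 - r) / (1 + r) + -2 * r ^ N / (1 - r)) 1 := hv.add hh
  have hF1 : F 1 = 1 := by
    show ((1 + r) / (1 + 1 * r)) ^ p + ((1:ℝ) - 1 ^ 2) * 1 ^ (N - 1) * r ^ N / (1 - 1 * r) = 1
    rw [hu1, Real.one_rpow]
    norm_num
  -- the derivative is negative
  have hRN : R ^ N ≤ r ^ N := pow_le_pow_left₀ hR0.le hr1.le N
  have hDneg : p * (1 - r) / (1 + r) + -2 * r ^ N / (1 - r) < 0 := by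
    rw [div_add_div _ _ (by nlinarith : (1:ℝ) + r ≠ 0) (by nlinarith : (1:ℝ) - r ≠ 0)]
    apply div_neg_of_neg_of_pos
    · have h1 : p * (1 - r) ^ 2 < p * (1 - R) ^ 2 := by
        nlinarith [mul_pos hp0 (mul_pos (sub_pos.mpr hr1) (show (0:ℝ) < 2 - R - r by linarith))]
      have h2 : 2 * (1 + R) * R ^ N ≤ 2 * (1 + r) * r ^ N := by
        nlinarith [pow_nonneg hR0.le N, pow_pos hr0 N]
      nlinarith
    · nlinarith
  -- extract a point
  have hslope := hasDerivAt_iff_tendsto_slope.mp hder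
  have hev1 : ∀ᶠ a in 𝓝[<] (1:ℝ), slope F 1 a < 0 := by
    have h := hslope.mono_left (nhdsWithin_mono _ (fun x hx => ne_of_lt hx))
    exact h.eventually (tendsto_id.eventually_lt_const hDneg)
  have hev2 : ∀ᶠ a in 𝓝[<] (1:ℝ), a ∈ Set.Ioo (1/2 : ℝ) 1 :=
    Ioo_mem_nhdsLT_of_mem ⟨by norm_num, le_refl 1⟩
  obtain ⟨a, ha1, ha2⟩ := (hev1.and hev2).exists
  refine ⟨a, by linarith [ha2.1], ha2.2, ?_⟩
  rw [slope_def_field] at ha1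
  have : (F a - F 1) / (a - 1) < 0 := ha1
  have hlt : 0 < F a - F 1 := by
    rcases lt_or_ge (F a - F 1) 0 with h | h
    · exfalso
      have : 0 ≤ (F a - F 1) / (a - 1) := div_nonneg_of_nonpos h.le (by linarith [ha2.2])
      linarith
    · rcases eq_or_lt_of_le h with h' | h'
      · exfalso; rw [← h'] at this; simp at this
      · exact h'
  rw [hF1] at hlt
  have hfin : 1 < F a := by linarith
  simpa [hF] using hfin


set_option maxHeartbeats 1600000

/-- Sharpness of the radius `R_{N,p}`: if `R ∈ (0,1)` is the root of
`2(1+r)rᴺ = p(1-r)²`, then for every `r ∈ (R,1)` there exist an operator valued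
analytic function `f(z) = ∑ₖ Aₖ zᵏ` bounded by `1` on the unit disk with
`A₀ = a₀ I`, `|a₀| < 1`, and a point `z` with `|z| = r`, such that
`‖f(z)‖^p + ∑_{k≥N} ‖Aₖ‖ rᵏ > 1`. -/
theorem bohr_fz_pow_p_sharpness
    {H : Type*} [NormedAddCommGroup H] [InnerProductSpace ℂ H] [CompleteSpace H]
    [Nontrivial H]
    (N : ℕ) (hN : 1 ≤ N) (p : ℝ) (hp0 : 0 < p) (hp1 : p ≤ 1)
    (R : ℝ) (hR0 : 0 < R) (hR1 : R < 1)
    (hroot : 2 * (1 + R) * R ^ N = p * (1 - R) ^ 2)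
    (r : ℝ) (hr1 : R < r) (hr2 : r < 1) :
    ∃ (f : ℂ → (H →L[ℂ] H)) (A : ℕ → (H →L[ℂ] H)) (a₀ : ℂ) (z : ℂ),
      (∀ w ∈ Metric.ball (0 : ℂ) 1, HasSum (fun k => w ^ k • A k) (f w)) ∧
      (∀ w ∈ Metric.ball (0 : ℂ) 1, ‖f w‖ ≤ 1) ∧
      A 0 = a₀ • (1 : H →L[ℂ] H) ∧ ‖a₀‖ < 1 ∧ ‖z‖ = r ∧
      Summable (fun k => ‖A (N + k)‖ * r ^ (N + k)) ∧
      1 < ‖f z‖ ^ p + ∑' k, ‖A (N + k)‖ * r ^ (N + k) := by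
  have hr0 : 0 < r := hR0.trans hr1
  obtain ⟨a, ha0, ha1, hkey⟩ := key_scalar N hN p hp0 R hR0 hR1 hroot r hr1 hr2
  have hnorm_a : ‖(a : ℂ)‖ = a := by
    rw [Complex.norm_real, Real.norm_eq_abs, abs_of_pos ha0]
  set c : ℕ → ℂ := fun j => if j = 0 then (a : ℂ) else -(1 - (a : ℂ) ^ 2) * (a : ℂ) ^ (j - 1)
    with hc
  set f : ℂ → (H →L[ℂ] H) :=
    fun w => (((a : ℂ) - w) / (1 - (a : ℂ) * w)) • (1 : H →L[ℂ] H) with hf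
  set A : ℕ → (H →L[ℂ] H) := fun j => c j • (1 : H →L[ℂ] H) with hA
  have hAnorm : ∀ j, ‖A j‖ = ‖c j‖ := by
    intro j
    show ‖c j • (1 : H →L[ℂ] H)‖ = ‖c j‖
    rw [norm_smul, norm_one, mul_one]
  have hawlt : ∀ w : ℂ, ‖w‖ < 1 → ‖(a : ℂ) * w‖ < 1 := by
    intro w hw
    rw [norm_mul, hnorm_a]
    nlinarith [norm_nonneg w]
  have hne : ∀ w : ℂ, ‖w‖ < 1 → 1 - (a : ℂ) * w ≠ 0 := by
    intro w hw h
    have h1 : (a : ℂ) * w = 1 := by linear_combination -h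
    have := hawlt w hw
    rw [h1] at this
    simp at this
  have hsum : ∀ w : ℂ, ‖w‖ < 1 →
      HasSum (fun k => w ^ k * c k) (((a : ℂ) - w) / (1 - (a : ℂ) * w)) := by
    intro w hw
    have hgeo := hasSum_geometric_of_norm_lt_one (hawlt w hw)
    have h1 : HasSum (fun k : ℕ => w ^ (k + 1) * c (k + 1))
        (-(1 - (a : ℂ) ^ 2) * w * (1 - (a : ℂ) * w)⁻¹) := by
      have h : HasSum (fun i => -(1 - (a : ℂ) ^ 2) * w * ((a : ℂ) * w) ^ i) _ := hgeo.mul_left (-(1 - (a : ℂ) ^ 2) * w)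
      convert h using 2 with k
      simp only [hc]
      simp only [Nat.add_sub_cancel, Nat.succ_ne_zero, if_false]
      rw [mul_pow]
      ring
    have h2 : HasSum (fun k => w ^ k * c k) _ := (hasSum_nat_add_iff (f := fun k => w ^ k * c k) 1).mp h1
    convert h2 using 1
    simp only [Finset.sum_range_one, pow_zero, one_mul, hc, if_pos rfl, ↓reduceIte]
    field_simp [hne w hw]
    ring
  have hbound : ∀ w : ℂ, ‖w‖ < 1 → ‖((a : ℂ) - w) / (1 - (a : ℂ) * w)‖ ≤ 1 := by
    intro w hw
    rw [norm_div, div_le_one (norm_pos_iff.mpr (hne w hw))]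
    have hw2 : w.re * w.re + w.im * w.im < 1 := by
      have h1 : Complex.normSq w < 1 := by
        rw [← Complex.sq_norm]
        nlinarith [norm_nonneg w]
      simpa [Complex.normSq_apply] using h1
    have hsq : ‖(a : ℂ) - w‖ ^ 2 ≤ ‖1 - (a : ℂ) * w‖ ^ 2 := by
      simp only [Complex.sq_norm]
      simp only [Complex.normSq_apply, Complex.sub_re, Complex.sub_im, Complex.mul_re,
        Complex.mul_im, Complex.ofReal_re, Complex.ofReal_im, Complex.one_re, Complex.one_im]
      nlinarith [mul_nonneg (by nlinarith : (0:ℝ) ≤ 1 - a ^ 2)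
        (by nlinarith : (0:ℝ) ≤ 1 - w.re * w.re - w.im * w.im)]
    nlinarith [norm_nonneg ((a : ℂ) - w), norm_nonneg (1 - (a : ℂ) * w), hsq]
  have har0 : 0 ≤ a * r := by positivity
  have har1 : a * r < 1 := by nlinarith
  have hterm : ∀ k, ‖A (N + k)‖ * r ^ (N + k)
      = ((1 - a ^ 2) * a ^ (N - 1) * r ^ N) * (a * r) ^ k := by
    intro k
    have hNk : N + k ≠ 0 := by omega
    have hcv : c (N + k) = ((-(1 - a ^ 2) * a ^ (N + k - 1) : ℝ) : ℂ) := by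
      simp only [hc, hNk, if_false]
      push_cast
      ring
    have hle : -(1 - a ^ 2) * a ^ (N + k - 1) ≤ 0 := by
      nlinarith [mul_nonneg (by nlinarith : (0:ℝ) ≤ 1 - a ^ 2) (pow_nonneg ha0.le (N + k - 1))]
    have hnv : ‖A (N + k)‖ = (1 - a ^ 2) * a ^ (N + k - 1) := by
      rw [hAnorm, hcv, Complex.norm_real, Real.norm_eq_abs, abs_of_nonpos hle]
      ring
    rw [hnv]
    have he1 : N + k - 1 = (N - 1) + k := by omega
    rw [he1, pow_add, pow_add, mul_pow]
    ring
  have hgeoR : HasSum (fun k : ℕ => ((1 - a ^ 2) * a ^ (N - 1) * r ^ N) * (a * r) ^ k)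
      (((1 - a ^ 2) * a ^ (N - 1) * r ^ N) * (1 - a * r)⁻¹) :=
    (hasSum_geometric_of_lt_one har0 har1).mul_left _
  refine ⟨f, A, (a : ℂ), -(r : ℂ), ?_, ?_, ?_, ?_, ?_, ?_, ?_⟩
  · intro w hw
    rw [mem_ball_zero_iff] at hw
    have h := (hsum w hw).smul_const (1 : H →L[ℂ] H)
    convert h using 2 with k
    show w ^ k • (c k • (1 : H →L[ℂ] H)) = (w ^ k * c k) • (1 : H →L[ℂ] H)
    rw [smul_smul]
  · intro w hw
    rw [mem_ball_zero_iff] at hw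
    show ‖(((a : ℂ) - w) / (1 - (a : ℂ) * w)) • (1 : H →L[ℂ] H)‖ ≤ 1
    rw [norm_smul, norm_one, mul_one]
    exact hbound w hw
  · show c 0 • (1 : H →L[ℂ] H) = (a : ℂ) • (1 : H →L[ℂ] H)
    simp [hc]
  · rw [hnorm_a]; exact ha1
  · simp [abs_of_pos hr0]
  · exact hgeoR.summable.congr fun k => (hterm k).symm
  · have htsum : ∑' k, ‖A (N + k)‖ * r ^ (N + k)
        = ((1 - a ^ 2) * a ^ (N - 1) * r ^ N) * (1 - a * r)⁻¹ := by
      rw [tsum_congr hterm]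
      exact hgeoR.tsum_eq
    have hfz : ‖f (-(r : ℂ))‖ = (a + r) / (1 + a * r) := by
      show ‖(((a : ℂ) - -(r:ℂ)) / (1 - (a : ℂ) * -(r:ℂ))) • (1 : H →L[ℂ] H)‖ = _
      rw [norm_smul, norm_one, mul_one]
      have heq : ((a : ℂ) - -(r:ℂ)) / (1 - (a : ℂ) * -(r:ℂ))
          = (((a + r) / (1 + a * r) : ℝ) : ℂ) := by
        push_cast
        ring_nf
      rw [heq, Complex.norm_real, Real.norm_eq_abs, abs_of_nonneg (by positivity)]
    rw [htsum, hfz, ← div_eq_mul_inv]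
    exact hkey
end

section
/- Let H be a complex Hilbert space, l ≥ 1, and let G(w) = c₁w + c₂w² + ⋯ + c_l w^l be a polynomial with nonnegative real coefficients satisfying ∑_{m=1}^l 8(2m−1)c_m(3/8)^{2m} ≤ 1. Then for every r with 1/3 < r < 1 there exists an analytic function f : 𝔻 → 𝓑(H) with power series expansion f(z) = ∑_{k=0}^∞ A_k z^k satisfying ‖f(z)‖ ≤ 1 for all z ∈ 𝔻 and A₀ = a₀·I with a₀ ∈ ℂ, |a₀| < 1, such that ∑_{k=0}^∞ ‖A_k‖ r^k + G(∑_{k=1}^∞ k‖A_k‖² r^{2k}) > 1. In fact, for a < 1 sufficiently close to 1 the function ψ_a(z) = ((a−z)/(1−az))·I has this property; i.e., the radius 1/3 cannot be replaced by any larger quantity. -/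
set_option maxHeartbeats 1000000


/-- Sharpness of the radius `1/3` in the improved operator valued Bohr inequality
with a polynomial `G(x) = ∑_{m=1}^l c_m x^m` whose nonnegative coefficients satisfy
`∑_{m=1}^l 8(2m-1) c_m (3/8)^{2m} ≤ 1`: for every `r ∈ (1/3, 1)` there exists an
operator valued analytic function `f(z) = ∑ₖ Aₖ zᵏ` bounded by `1` on the unit disk
with `A₀ = a₀ I`, `|a₀| < 1`, such that
`∑ₖ ‖Aₖ‖ rᵏ + G(∑ₖ k ‖Aₖ‖² r^{2k}) > 1`. -/
theorem bohr_improved_polynomial_sharpness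
    {H : Type*} [NormedAddCommGroup H] [InnerProductSpace ℂ H] [CompleteSpace H]
    [Nontrivial H]
    (l : ℕ) (hl : 1 ≤ l) (c : ℕ → ℝ) (hc : ∀ m ∈ Finset.Icc 1 l, 0 ≤ c m)
    (hcsum : ∑ m ∈ Finset.Icc 1 l,
      8 * (2 * (m : ℝ) - 1) * c m * (3 / 8 : ℝ) ^ (2 * m) ≤ 1)
    (r : ℝ) (hr1 : 1 / 3 < r) (hr2 : r < 1) :
    ∃ (f : ℂ → (H →L[ℂ] H)) (A : ℕ → (H →L[ℂ] H)) (a₀ : ℂ),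
      (∀ z ∈ Metric.ball (0 : ℂ) 1, HasSum (fun k => z ^ k • A k) (f z)) ∧
      (∀ z ∈ Metric.ball (0 : ℂ) 1, ‖f z‖ ≤ 1) ∧
      A 0 = a₀ • (1 : H →L[ℂ] H) ∧ ‖a₀‖ < 1 ∧
      Summable (fun k => ‖A k‖ * r ^ k) ∧
      Summable (fun k : ℕ => (k : ℝ) * ‖A k‖ ^ 2 * r ^ (2 * k)) ∧
      1 < ∑' k, ‖A k‖ * r ^ k +
            ∑ m ∈ Finset.Icc 1 l,
              c m * (∑' k : ℕ, (k : ℝ) * ‖A k‖ ^ 2 * r ^ (2 * k)) ^ m := by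
  have hr0 : (0:ℝ) < r := by linarith
  set a : ℝ := (1+r)/(4*r) with ha_def
  have h4r : (0:ℝ) < 4*r := by linarith
  have ha0 : 0 < a := div_pos (by linarith) h4r
  have ha1 : a < 1 := by rw [ha_def, div_lt_one h4r]; linarith
  have har : a * r < 1 := by nlinarith
  have har0 : 0 ≤ a * r := by positivity
  have h2ar : 2*a*r = (1+r)/2 := by rw [ha_def]; field_simp; ring
  have hkey : 1 < r + 2*a*r := by rw [h2ar]; linarith
  have ha2 : (0:ℝ) ≤ 1 - a^2 := by nlinarith
  clear_value a
  set α : ℕ → ℝ := fun k => if k = 0 then a else -((1-a^2) * a^(k-1)) with hα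
  have hα0 : α 0 = a := by simp [hα]
  have hαs : ∀ k, α (k+1) = -((1-a^2)*a^k) := fun k => by simp [hα]
  set A : ℕ → (H →L[ℂ] H) := fun k => ((α k : ℝ) : ℂ) • 1 with hA
  have hnorm1 : ‖(1 : H →L[ℂ] H)‖ = 1 := ContinuousLinearMap.norm_id
  have hnormA : ∀ k, ‖A k‖ = |α k| := fun k => by
    rw [hA, norm_smul, hnorm1, mul_one, Complex.norm_real, Real.norm_eq_abs]
  have hn0 : ‖A 0‖ = a := by rw [hnormA, hα0, abs_of_pos ha0]
  have hns : ∀ k, ‖A (k+1)‖ = (1-a^2)*a^k := fun k => by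
    rw [hnormA, hαs, abs_neg, abs_of_nonneg (mul_nonneg ha2 (pow_nonneg ha0.le k))]
  clear_value α
  set f : ℂ → (H →L[ℂ] H) := fun z => ((((a:ℂ) - z)/(1 - (a:ℂ)*z)) : ℂ) • 1 with hf
  clear_value A
  clear_value f
  -- real geometric sums
  have hgeoR : HasSum (fun k : ℕ => (a*r)^k) (1 - a*r)⁻¹ := hasSum_geometric_of_lt_one har0 har
  have h2R := hgeoR.mul_left ((1-a^2)*r)
  have h3R : HasSum (fun k => ‖A (k+1)‖ * r^(k+1)) ((1-a^2)*r * (1-a*r)⁻¹) := by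
    convert h2R using 2 with k
    · rfl
    rw [hns]; ring
  have h4R := (hasSum_nat_add_iff (f := fun k => ‖A k‖ * r^k) 1).mp h3R
  have h5R : HasSum (fun k => ‖A k‖*r^k) ((1-a^2)*r*(1-a*r)⁻¹ + a) := by
    convert h4R using 1
    · rfl
    simp [hn0]
  have hAle : ∀ k, ‖A k‖ ≤ 1 := by
    intro k
    cases k with
    | zero => rw [hn0]; exact ha1.le
    | succ k =>
      rw [hns]
      have h1 : a^k ≤ 1 := pow_le_one₀ ha0.le ha1.le
      nlinarith [pow_nonneg ha0.le k]
  -- second sum summability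
  have hsum2 : Summable (fun k : ℕ => (k : ℝ) * ‖A k‖ ^ 2 * r ^ (2 * k)) := by
    have hmaj : Summable (fun k : ℕ => (k:ℝ)^1 * (r^2)^k) :=
      summable_pow_mul_geometric_of_norm_lt_one 1
        (by rw [Real.norm_eq_abs, abs_of_nonneg (sq_nonneg r)]; nlinarith)
    apply Summable.of_nonneg_of_le (fun k => by positivity) _ hmaj
    intro k
    rw [pow_mul, pow_one]
    have h1 : ‖A k‖^2 ≤ 1 := by nlinarith [norm_nonneg (A k), hAle k]
    have h2 : (0:ℝ) ≤ (r^2)^k := by positivity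
    nlinarith [mul_nonneg (Nat.cast_nonneg (α := ℝ) k) h2]
  refine ⟨f, A, (a:ℂ), ?_, ?_, ?_, ?_, h5R.summable, hsum2, ?_⟩
  · -- HasSum of f
    intro z hz
    rw [mem_ball_zero_iff] at hz
    have haz : ‖(a:ℂ)*z‖ < 1 := by
      rw [norm_mul, Complex.norm_real, Real.norm_eq_abs, abs_of_pos ha0]
      nlinarith [norm_nonneg z]
    have hden : (1 : ℂ) - (a:ℂ)*z ≠ 0 := by
      intro h
      rw [sub_eq_zero] at h
      rw [← h] at haz
      simp at haz
    have hgeo : HasSum (fun k : ℕ => ((a:ℂ)*z)^k) (1 - (a:ℂ)*z)⁻¹ :=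
      hasSum_geometric_of_norm_lt_one haz
    have h2 := hgeo.mul_left (-(1-(a:ℂ)^2)*z)
    have h3 : HasSum (fun k : ℕ => z^(k+1) * ((α (k+1) : ℝ) : ℂ))
        (-(1-(a:ℂ)^2)*z * (1-(a:ℂ)*z)⁻¹) := by
      convert h2 using 2 with k
      · rfl
      rw [hαs]; push_cast; ring
    have h4 := (hasSum_nat_add_iff (f := fun k => z^k * ((α k : ℝ) : ℂ)) 1).mp h3
    have h5 : HasSum (fun k : ℕ => z^k * ((α k : ℝ) : ℂ)) (((a:ℂ) - z)/(1 - (a:ℂ)*z)) := by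
      convert h4 using 1
      · rfl
      rw [Finset.range_one, Finset.sum_singleton, hα0]
      field_simp
      ring
    have hfun : (fun k : ℕ => z ^ k • A k)
        = fun k : ℕ => (z^k * ((α k : ℝ) : ℂ)) • (1 : H →L[ℂ] H) := by
      funext k
      simp only [hA]
      rw [smul_smul]
    rw [hfun, hf]
    exact h5.smul_const 1
  · -- norm bound
    intro z hz
    rw [mem_ball_zero_iff] at hz
    rw [hf]
    simp only []
    rw [norm_smul, hnorm1, mul_one, norm_div]
    apply div_le_one_of_le₀ _ (norm_nonneg _)
    have habs : ‖z‖ < 1 := by exact hz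
    have hz2 : z.re^2 + z.im^2 < 1 := by
      have h1 : Complex.normSq z < 1 := by
        rw [← Complex.sq_norm]; nlinarith [norm_nonneg z]
      simpa [Complex.normSq_apply, sq] using h1
    rw [Complex.norm_def, Complex.norm_def]
    apply Real.sqrt_le_sqrt
    simp only [Complex.normSq_apply, Complex.sub_re, Complex.sub_im, Complex.mul_re,
      Complex.mul_im, Complex.ofReal_re, Complex.ofReal_im, Complex.one_re, Complex.one_im]
    nlinarith [mul_nonneg (by nlinarith : (0:ℝ) ≤ 1 - a^2)
      (by nlinarith : (0:ℝ) ≤ 1 - z.re^2 - z.im^2)]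
  · -- A 0
    simp only [hA]
    rw [hα0]
  · -- norm a₀
    rw [Complex.norm_real, Real.norm_eq_abs, abs_of_pos ha0]; exact ha1
  · -- final inequality
    have hS2nonneg : 0 ≤ ∑' k:ℕ, (k:ℝ)*‖A k‖^2*r^(2*k) :=
      tsum_nonneg (fun k => by positivity)
    have hG : 0 ≤ ∑ m ∈ Finset.Icc 1 l,
        c m * (∑' k : ℕ, (k : ℝ) * ‖A k‖ ^ 2 * r ^ (2 * k)) ^ m :=
      Finset.sum_nonneg fun m hm => mul_nonneg (hc m hm) (pow_nonneg hS2nonneg m)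
    have htsum : ∑' k, ‖A k‖*r^k = (1-a^2)*r*(1-a*r)⁻¹ + a := h5R.tsum_eq
    have hdenR : 0 < 1 - a*r := by linarith
    have h6 : 1 - a < (1-a^2)*r/(1-a*r) := by
      rw [lt_div_iff₀ hdenR]
      nlinarith [mul_pos (sub_pos.mpr ha1) (by linarith : (0:ℝ) < r + 2*a*r - 1)]
    have h7 : 1 < (1-a^2)*r*(1-a*r)⁻¹ + a := by
      have he : (1-a^2)*r*(1-a*r)⁻¹ = (1-a^2)*r/(1-a*r) := (div_eq_mul_inv _ _).symm
      rw [he]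
      linarith
    rw [htsum]
    linarith
end

section
/- Let H be a complex Hilbert space and f : 𝔻 → 𝓑(H) an analytic function satisfying ‖f(z)‖ ≤ 1 for all z ∈ 𝔻. Then for every z ∈ 𝔻, ‖f(z)‖ ≤ (‖f(0)‖ + |z|)/(1 + ‖f(0)‖·|z|). -/
open Metric Complex

lemma sp_mono {s₁ s₂ t : ℝ} (h0 : 0 ≤ s₁) (h12 : s₁ ≤ s₂) (ht : 0 ≤ t) (ht1 : t ≤ 1) :
    (s₁ + t) / (1 + s₁ * t) ≤ (s₂ + t) / (1 + s₂ * t) := by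
  have hs2 : 0 ≤ s₂ := h0.trans h12
  have d1 : 0 < 1 + s₁ * t := by nlinarith
  have d2 : 0 < 1 + s₂ * t := by nlinarith
  rw [div_le_div_iff₀ d1 d2]
  nlinarith [mul_nonneg (sub_nonneg.2 h12) (mul_nonneg ht ht), mul_nonneg (sub_nonneg.2 h12) (sub_nonneg.2 (show t*t ≤ 1 by nlinarith))]

lemma scalar_sp_strict (g : ℂ → ℂ) (hg : DifferentiableOn ℂ g (ball (0:ℂ) 1))
    (hb : ∀ w ∈ ball (0:ℂ) 1, ‖g w‖ < 1) (z : ℂ) (hz : z ∈ ball (0:ℂ) 1) :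
    ‖g z‖ ≤ (‖g 0‖ + ‖z‖) / (1 + ‖g 0‖ * ‖z‖) := by
  have h0mem : (0:ℂ) ∈ ball (0:ℂ) 1 := by simp
  set a := g 0 with ha_def
  have ha : ‖a‖ < 1 := hb 0 h0mem
  set h : ℂ → ℂ := fun w => (g w - a) / (1 - (starRingEnd ℂ) a * g w) with hh
  have hden : ∀ w ∈ ball (0:ℂ) 1, 1 - (starRingEnd ℂ) a * g w ≠ 0 := by
    intro w hw
    have hlt : ‖(starRingEnd ℂ) a * g w‖ < 1 := by
      rw [norm_mul, RCLike.norm_conj]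
      calc ‖a‖ * ‖g w‖ ≤ 1 * ‖g w‖ := by
            apply mul_le_mul_of_nonneg_right ha.le (norm_nonneg _)
        _ < 1 := by simpa using hb w hw
    intro hcon
    have : (starRingEnd ℂ) a * g w = 1 := by linear_combination -hcon
    rw [this] at hlt; simp at hlt
  have hd : DifferentiableOn ℂ h (ball (0:ℂ) 1) := by
    apply DifferentiableOn.div (hg.sub (differentiableOn_const a))
      ((differentiableOn_const (1:ℂ)).sub ((differentiableOn_const _).mul hg)) hden
  have hmaps : Set.MapsTo h (ball (0:ℂ) 1) (ball (0:ℂ) 1) := by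
    intro w hw
    rw [mem_ball_zero_iff]
    have hD := hden w hw
    have hDpos : 0 < ‖1 - (starRingEnd ℂ) a * g w‖ := norm_pos_iff.2 hD
    rw [hh]; simp only
    rw [norm_div, div_lt_one hDpos]
    have hsq : Complex.normSq (g w - a) < Complex.normSq (1 - (starRingEnd ℂ) a * g w) := by
      have e1 : Complex.normSq (g w - a) =
          Complex.normSq (g w) + Complex.normSq a - 2 * (g w * (starRingEnd ℂ) a).re := by
        rw [Complex.normSq_sub]
      have e2 : Complex.normSq (1 - (starRingEnd ℂ) a * g w) =
          1 + Complex.normSq a * Complex.normSq (g w) - 2 * (g w * (starRingEnd ℂ) a).re := by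
        rw [Complex.normSq_sub, one_mul, Complex.normSq_mul, Complex.normSq_conj,
          Complex.normSq_one]
        have hre : ((starRingEnd ℂ) ((starRingEnd ℂ) a * g w)).re
            = (g w * (starRingEnd ℂ) a).re := by
          simp [Complex.mul_re, Complex.conj_re, Complex.conj_im]
          ring
        rw [hre]
      have hga : Complex.normSq (g w) < 1 := by
        have h1 := hb w hw
        rw [← Complex.sq_norm]
        nlinarith [norm_nonneg (g w)]
      have haa : Complex.normSq a < 1 := by
        have h1 := ha
        rw [← Complex.sq_norm]
        nlinarith [norm_nonneg a]
      rw [e1, e2]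
      nlinarith
    have hsq' : ‖g w - a‖^2 < ‖1 - (starRingEnd ℂ) a * g w‖^2 := by
      rw [Complex.sq_norm, Complex.sq_norm]
      exact hsq
    nlinarith [norm_nonneg (g w - a), hDpos]
  have h00 : h 0 = 0 := by simp [hh, ha_def]
  have hz1 : ‖z‖ < 1 := by simpa [mem_ball_zero_iff] using hz
  have habs : ‖h z‖ ≤ ‖z‖ :=
    Complex.norm_le_norm_of_mapsTo_ball hd (hmaps.mono_right ball_subset_closedBall) h00 hz1
  -- invert the Möbius transform
  have hu1 : ‖h z‖ < 1 := by
    exact lt_of_le_of_lt habs hz1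
  set u := h z with hu_def
  have hD := hden z hz
  have hrel : u * (1 - (starRingEnd ℂ) a * g z) = g z - a := by
    rw [hu_def, hh]
    exact div_mul_cancel₀ _ hD
  have hD2 : (1 + (starRingEnd ℂ) a * u) ≠ 0 := by
    intro hcon
    have h1 : ‖(starRingEnd ℂ) a * u‖ < 1 := by
      rw [norm_mul, RCLike.norm_conj]
      calc ‖a‖ * ‖u‖ ≤ 1 * ‖u‖ := mul_le_mul_of_nonneg_right ha.le (norm_nonneg _)
        _ < 1 := by simpa using hu1
    have : (starRingEnd ℂ) a * u = -1 := by linear_combination hcon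
    rw [this] at h1; simp at h1
  have hkey : g z = (u + a) / (1 + (starRingEnd ℂ) a * u) := by
    rw [eq_div_iff hD2]
    linear_combination -hrel
  -- estimate
  have hnum : ‖u + a‖ * (1 + ‖a‖ * ‖u‖) ≤ (‖u‖ + ‖a‖) * ‖1 + (starRingEnd ℂ) a * u‖ := by
    have hX : 0 ≤ ‖u + a‖ * (1 + ‖a‖ * ‖u‖) := by positivity
    have hY : 0 ≤ (‖u‖ + ‖a‖) * ‖1 + (starRingEnd ℂ) a * u‖ := by positivity
    have hsq : (‖u + a‖ * (1 + ‖a‖ * ‖u‖))^2 ≤ ((‖u‖ + ‖a‖) * ‖1 + (starRingEnd ℂ) a * u‖)^2 := by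
      have e1 : ‖u + a‖^2 = ‖u‖^2 + ‖a‖^2 + 2 * (u * (starRingEnd ℂ) a).re := by
        rw [Complex.sq_norm, Complex.sq_norm, Complex.sq_norm, Complex.normSq_add]
      have e2 : ‖1 + (starRingEnd ℂ) a * u‖^2 = 1 + ‖a‖^2 * ‖u‖^2 + 2 * (u * (starRingEnd ℂ) a).re := by
        rw [Complex.sq_norm, Complex.sq_norm, Complex.sq_norm, Complex.normSq_add,
          Complex.normSq_one, Complex.normSq_mul, Complex.normSq_conj]
        have hre : ((1:ℂ) * (starRingEnd ℂ) ((starRingEnd ℂ) a * u)).re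
            = (u * (starRingEnd ℂ) a).re := by
          simp [Complex.mul_re, Complex.conj_re, Complex.conj_im]
          ring
        rw [hre]
      have hc : (u * (starRingEnd ℂ) a).re ≤ ‖u‖ * ‖a‖ := by
        calc (u * (starRingEnd ℂ) a).re ≤ ‖u * (starRingEnd ℂ) a‖ :=
              Complex.re_le_norm _
          _ = ‖u‖ * ‖a‖ := by
              rw [norm_mul, Complex.norm_conj]
      have hr1 : ‖u‖ ≤ 1 := hu1.le
      have hs1 : ‖a‖ ≤ 1 := ha.le
      have hprod : 0 ≤ (‖u‖ * ‖a‖ - (u * (starRingEnd ℂ) a).re) * ((1 - ‖u‖^2) * (1 - ‖a‖^2)) := by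
        apply mul_nonneg (sub_nonneg.2 hc)
        apply mul_nonneg
        · nlinarith [norm_nonneg u]
        · nlinarith [norm_nonneg a]
      nlinarith [e1, e2, hprod, norm_nonneg u, norm_nonneg a, sq_nonneg (‖u‖ - ‖a‖)]
    nlinarith [hX, hY, hsq]
  have hden1 : (0:ℝ) < 1 + ‖a‖ * ‖u‖ := by positivity
  have hDpos : (0:ℝ) < ‖1 + (starRingEnd ℂ) a * u‖ := norm_pos_iff.2 hD2
  have step1 : ‖g z‖ ≤ (‖u‖ + ‖a‖) / (1 + ‖a‖ * ‖u‖) := by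
    rw [hkey, norm_div, div_le_div_iff₀ hDpos hden1]
    linarith [hnum]
  have step2 : (‖u‖ + ‖a‖) / (1 + ‖a‖ * ‖u‖) ≤ (‖z‖ + ‖a‖) / (1 + ‖a‖ * ‖z‖) := by
    have h1 : (‖u‖ + ‖a‖) / (1 + ‖u‖ * ‖a‖) ≤ (‖z‖ + ‖a‖) / (1 + ‖z‖ * ‖a‖) := by
      apply sp_mono (norm_nonneg u) _ (norm_nonneg a) ha.le
      exact habs
    rw [mul_comm ‖a‖ ‖u‖, mul_comm ‖a‖ ‖z‖]
    exact h1
  calc ‖g z‖ ≤ (‖u‖ + ‖a‖) / (1 + ‖a‖ * ‖u‖) := step1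
    _ ≤ (‖z‖ + ‖a‖) / (1 + ‖a‖ * ‖z‖) := step2
    _ = (‖g 0‖ + ‖z‖) / (1 + ‖g 0‖ * ‖z‖) := by rw [ha_def]; ring_nf

open Filter Topology in
lemma scalar_sp (g : ℂ → ℂ) (hg : DifferentiableOn ℂ g (ball (0:ℂ) 1))
    (hb : ∀ w ∈ ball (0:ℂ) 1, ‖g w‖ ≤ 1) (z : ℂ) (hz : z ∈ ball (0:ℂ) 1) :
    ‖g z‖ ≤ (‖g 0‖ + ‖z‖) / (1 + ‖g 0‖ * ‖z‖) := by
  have key : ∀ r : ℝ, r ∈ Set.Ioo (0:ℝ) 1 →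
      r * ‖g z‖ ≤ (r * ‖g 0‖ + ‖z‖) / (1 + r * ‖g 0‖ * ‖z‖) := by
    intro r hr
    have hgr : DifferentiableOn ℂ (fun w => (r : ℂ) * g w) (ball (0:ℂ) 1) :=
      (differentiableOn_const _).mul hg
    have hbr : ∀ w ∈ ball (0:ℂ) 1, ‖(r : ℂ) * g w‖ < 1 := by
      intro w hw
      rw [norm_mul, Complex.norm_real, Real.norm_of_nonneg hr.1.le]
      calc r * ‖g w‖ ≤ r * 1 := mul_le_mul_of_nonneg_left (hb w hw) hr.1.le
        _ < 1 := by simpa using hr.2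
    have := scalar_sp_strict _ hgr hbr z hz
    simpa [norm_mul, Complex.norm_real, Real.norm_of_nonneg hr.1.le,
      _root_.abs_of_nonneg hr.1.le] using this
  have hlim1 : Tendsto (fun r : ℝ => r * ‖g z‖) (𝓝[<] (1:ℝ)) (𝓝 (‖g z‖)) := by
    have : Tendsto (fun r : ℝ => r * ‖g z‖) (𝓝 (1:ℝ)) (𝓝 (1 * ‖g z‖)) :=
      (continuous_id.mul continuous_const).tendsto 1
    simpa using this.mono_left nhdsWithin_le_nhds
  have hdpos : (0:ℝ) < 1 + ‖g 0‖ * ‖z‖ := by positivity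
  have hlim2 : Tendsto (fun r : ℝ => (r * ‖g 0‖ + ‖z‖) / (1 + r * ‖g 0‖ * ‖z‖))
      (𝓝[<] (1:ℝ)) (𝓝 ((‖g 0‖ + ‖z‖) / (1 + ‖g 0‖ * ‖z‖))) := by
    have : Tendsto (fun r : ℝ => (r * ‖g 0‖ + ‖z‖) / (1 + r * ‖g 0‖ * ‖z‖))
        (𝓝 (1:ℝ)) (𝓝 ((1 * ‖g 0‖ + ‖z‖) / (1 + 1 * ‖g 0‖ * ‖z‖))) := by
      apply Tendsto.div
      · exact ((continuous_id.mul continuous_const).add continuous_const).tendsto 1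
      · exact (continuous_const.add ((continuous_id.mul continuous_const).mul continuous_const)).tendsto 1
      · simpa using hdpos.ne'
    simpa using this.mono_left nhdsWithin_le_nhds
  have hev : ∀ᶠ r in 𝓝[<] (1:ℝ), r * ‖g z‖ ≤ (r * ‖g 0‖ + ‖z‖) / (1 + r * ‖g 0‖ * ‖z‖) := by
    filter_upwards [Ioo_mem_nhdsLT_of_mem (Set.mem_Ioc.2 ⟨zero_lt_one, le_refl 1⟩)] with r hr
    exact key r hr
  exact le_of_tendsto_of_tendsto hlim1 hlim2 hev

/-- Operator valued Schwarz–Pick growth estimate: if `f` is analytic on the unit disk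
with values in `𝓑(H)` and `‖f(z)‖ ≤ 1` there, then
`‖f(z)‖ ≤ (‖f(0)‖ + |z|)/(1 + ‖f(0)‖|z|)` for every `z` in the disk. -/
theorem operator_schwarz_pick_growth
    {H : Type*} [NormedAddCommGroup H] [InnerProductSpace ℂ H] [CompleteSpace H]
    (f : ℂ → (H →L[ℂ] H))
    (hf : AnalyticOnNhd ℂ f (Metric.ball (0 : ℂ) 1))
    (hb : ∀ z ∈ Metric.ball (0 : ℂ) 1, ‖f z‖ ≤ 1)
    (z : ℂ) (hz : z ∈ Metric.ball (0 : ℂ) 1) :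
    ‖f z‖ ≤ (‖f 0‖ + ‖z‖) / (1 + ‖f 0‖ * ‖z‖) := by
  have hT : (0:ℝ) ≤ (‖f 0‖ + ‖z‖) / (1 + ‖f 0‖ * ‖z‖) := by positivity
  apply ContinuousLinearMap.opNorm_le_bound _ hT
  intro x
  by_cases hfx : f z x = 0
  · rw [hfx, norm_zero]; positivity
  have hx : x ≠ 0 := by rintro rfl; simp at hfx
  have hxpos : (0:ℝ) < ‖x‖ := norm_pos_iff.2 hx
  set y : H := (‖f z x‖)⁻¹ • f z x with hy_def
  have hy : ‖y‖ = 1 := by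
    rw [hy_def, norm_smul, norm_inv, norm_norm, inv_mul_cancel₀ (norm_pos_iff.2 hfx).ne']
  set g : ℂ → ℂ := fun w => (‖x‖ : ℂ)⁻¹ * (inner ℂ y (f w x) : ℂ) with hg_def
  have hgd : DifferentiableOn ℂ g (ball (0:ℂ) 1) := by
    apply DifferentiableOn.const_mul
    have h1 : DifferentiableOn ℂ (fun w => f w x) (ball (0:ℂ) 1) :=
      hf.differentiableOn.clm_apply (differentiableOn_const x)
    exact (innerSL ℂ y).differentiable.comp_differentiableOn h1
  have hgb : ∀ w ∈ ball (0:ℂ) 1, ‖g w‖ ≤ 1 := by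
    intro w hw
    rw [hg_def]
    simp only [norm_mul, norm_inv, Complex.norm_real, Real.norm_of_nonneg (norm_nonneg x)]
    calc ‖x‖⁻¹ * ‖(inner ℂ y (f w x) : ℂ)‖ ≤ ‖x‖⁻¹ * (‖y‖ * ‖f w x‖) := by
          apply mul_le_mul_of_nonneg_left (norm_inner_le_norm y _) (by positivity)
      _ = ‖x‖⁻¹ * ‖f w x‖ := by rw [hy, one_mul]
      _ ≤ ‖x‖⁻¹ * (‖f w‖ * ‖x‖) := by
          apply mul_le_mul_of_nonneg_left ((f w).le_opNorm x) (by positivity)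
      _ = ‖f w‖ := by field_simp
      _ ≤ 1 := hb w hw
  have hg0 : ‖g 0‖ ≤ ‖f 0‖ := by
    rw [hg_def]
    simp only [norm_mul, norm_inv, Complex.norm_real, Real.norm_of_nonneg (norm_nonneg x)]
    calc ‖x‖⁻¹ * ‖(inner ℂ y (f 0 x) : ℂ)‖ ≤ ‖x‖⁻¹ * (‖y‖ * ‖f 0 x‖) := by
          apply mul_le_mul_of_nonneg_left (norm_inner_le_norm y _) (by positivity)
      _ = ‖x‖⁻¹ * ‖f 0 x‖ := by rw [hy, one_mul]
      _ ≤ ‖x‖⁻¹ * (‖f 0‖ * ‖x‖) := by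
          apply mul_le_mul_of_nonneg_left ((f 0).le_opNorm x) (by positivity)
      _ = ‖f 0‖ := by field_simp
  have hinner : (inner ℂ y (f z x) : ℂ) = (‖f z x‖ : ℂ) := by
    rw [hy_def, RCLike.real_smul_eq_coe_smul (K := ℂ), inner_smul_left,
      inner_self_eq_norm_sq_to_K]
    have hpos : (0:ℝ) < ‖f z x‖ := norm_pos_iff.2 hfx
    push_cast
    rw [map_inv₀]
    simp only [Complex.conj_ofReal, RCLike.conj_ofReal]
    have hne : ((‖f z x‖ : ℝ) : ℂ) ≠ 0 := Complex.ofReal_ne_zero.2 hpos.ne'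
    field_simp
    rfl
  have hgz : ‖g z‖ = ‖x‖⁻¹ * ‖f z x‖ := by
    rw [hg_def]
    simp only [hinner, norm_mul, norm_inv, Complex.norm_real,
      Real.norm_of_nonneg (norm_nonneg x), Real.norm_of_nonneg (norm_nonneg (f z x))]
  have hmain := scalar_sp g hgd hgb z hz
  have hmono : (‖g 0‖ + ‖z‖) / (1 + ‖g 0‖ * ‖z‖) ≤ (‖f 0‖ + ‖z‖) / (1 + ‖f 0‖ * ‖z‖) := by
    have hz1 : ‖z‖ ≤ 1 := le_of_lt (by simpa [mem_ball_zero_iff] using hz)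
    exact sp_mono (norm_nonneg _) hg0 (norm_nonneg z) hz1
  have : ‖x‖⁻¹ * ‖f z x‖ ≤ (‖f 0‖ + ‖z‖) / (1 + ‖f 0‖ * ‖z‖) := by
    rw [← hgz]; exact hmain.trans hmono
  calc ‖f z x‖ = (‖x‖⁻¹ * ‖f z x‖) * ‖x‖ := by field_simp
    _ ≤ (‖f 0‖ + ‖z‖) / (1 + ‖f 0‖ * ‖z‖) * ‖x‖ :=
        mul_le_mul_of_nonneg_right this (norm_nonneg x)
end

section
/- Let H be a complex Hilbert space and f : 𝔻 → 𝓑(H) an analytic function with power series expansion f(z) = ∑_{k=0}^∞ A_k z^k (A_k ∈ 𝓑(H)) satisfying ‖f(z)‖ ≤ 1 for all z ∈ 𝔻 and A₀ = a₀·I for some a₀ ∈ ℂ with |a₀| < 1. Then ‖A_n‖ ≤ 1 − |a₀|² for every integer n ≥ 1. -/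
open Metric Set Finset

private lemma key_ineq {H : Type*} [NormedAddCommGroup H] [InnerProductSpace ℂ H]
    (a : ℂ) (ha : ‖a‖ ≤ 1) (u v : H) (huv : ‖v‖ ≤ ‖u‖) :
    ‖v - a • u‖ ≤ ‖u - (starRingEnd ℂ a) • v‖ := by
  rw [← pow_le_pow_iff_left₀ (norm_nonneg _) (norm_nonneg _) two_ne_zero]
  have h1 := @norm_sub_sq ℂ H _ _ _ v (a • u)
  have h2 := @norm_sub_sq ℂ H _ _ _ u ((starRingEnd ℂ a) • v)
  have hc : RCLike.re (inner ℂ v (a • u) : ℂ) = RCLike.re (inner ℂ u ((starRingEnd ℂ a) • v) : ℂ) := by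
    rw [inner_smul_right, inner_smul_right, ← inner_conj_symm v u]
    have : (starRingEnd ℂ) a * inner ℂ u v
        = (starRingEnd ℂ) (a * (starRingEnd ℂ) (inner ℂ u v)) := by
      rw [map_mul, Complex.conj_conj]
    rw [this, RCLike.conj_re]
  rw [h1, h2, hc, norm_smul, norm_smul, RCLike.norm_conj]
  have hu2 : ‖v‖ ^ 2 ≤ ‖u‖ ^ 2 :=
    pow_le_pow_left₀ (norm_nonneg _) huv 2
  have ha2 : ‖a‖ ^ 2 ≤ 1 := by nlinarith [norm_nonneg a]
  nlinarith [mul_nonneg (sub_nonneg.2 ha2) (sub_nonneg.2 hu2)]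

open Metric Set Finset

private lemma le_one_of_eps_bound (x : ℝ)
    (h : ∀ ε : ℝ, 0 < ε → ε ≤ 1/2 → x ≤ (1 + ε) / (1 - ε)) : x ≤ 1 := by
  by_contra hcon
  push_neg at hcon
  have hδ : 0 < x - 1 := by linarith
  have hεpos : 0 < min (1/2 : ℝ) ((x-1)/8) := lt_min (by norm_num) (by linarith)
  have hε2 : min (1/2 : ℝ) ((x-1)/8) ≤ 1/2 := min_le_left _ _
  have hεδ : min (1/2 : ℝ) ((x-1)/8) ≤ (x-1)/8 := min_le_right _ _
  have hh := h _ hεpos hε2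
  have hub : (1 + min (1/2 : ℝ) ((x-1)/8)) / (1 - min (1/2 : ℝ) ((x-1)/8))
      ≤ 1 + 4 * min (1/2 : ℝ) ((x-1)/8) := by
    rw [div_le_iff₀ (by linarith)]
    nlinarith
  linarith

set_option maxHeartbeats 1600000 in
private lemma coeff_one_bound_s18 {H : Type*} [NormedAddCommGroup H] [InnerProductSpace ℂ H]
    [CompleteSpace H] (B : ℕ → (H →L[ℂ] H))
    (hsum : ∀ w ∈ Metric.ball (0 : ℂ) 1, Summable (fun k => w ^ k • B k))
    (hbd : ∀ w ∈ Metric.ball (0 : ℂ) 1, ‖∑' k, w ^ k • B k‖ ≤ 1)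
    (a₀ : ℂ) (ha₀ : ‖a₀‖ < 1) (hB0 : B 0 = a₀ • (1 : H →L[ℂ] H)) :
    ‖B 1‖ ≤ 1 - ‖a₀‖ ^ 2 := by
  classical
  set g : ℂ → (H →L[ℂ] H) := fun w => ∑' k, w ^ k • B k with hg_def
  set p : FormalMultilinearSeries ℂ ℂ (H →L[ℂ] H) :=
    fun k => ContinuousMultilinearMap.mkPiRing ℂ (Fin k) (B k) with hp_def
  have hp_apply : ∀ (k : ℕ) (y : ℂ), (p k fun _ => y) = y ^ k • B k := by
    intro k y
    simp [hp_def, ContinuousMultilinearMap.mkPiRing_apply]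
  have hball : ∀ r : NNReal, (r : ℝ) < 1 → 0 < r → HasFPowerSeriesOnBall g p 0 r := by
    intro r hr hrpos
    have hrmem : ((r : ℝ) : ℂ) ∈ Metric.ball (0 : ℂ) 1 := by
      simp [Metric.mem_ball, dist_zero_right, abs_of_nonneg r.coe_nonneg, hr]
    have ht : Filter.Tendsto (fun k => ‖B k‖ * (r : ℝ) ^ k) Filter.atTop (nhds 0) := by
      have h0 := (hsum _ hrmem).tendsto_atTop_zero.norm
      simp only [norm_zero] at h0
      refine h0.congr fun k => ?_
      rw [norm_smul, norm_pow, Complex.norm_real, Real.norm_eq_abs,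
        abs_of_nonneg r.coe_nonneg, mul_comm]
    obtain ⟨C, hC⟩ := ht.bddAbove_range
    refine ⟨p.le_radius_of_bound C fun k => ?_, ENNReal.coe_pos.2 hrpos, fun hy => ?_⟩
    · have hk : ‖B k‖ * (r : ℝ) ^ k ≤ C := hC ⟨k, rfl⟩
      simpa [hp_def, ContinuousMultilinearMap.norm_mkPiRing] using hk
    · rename_i y
      rw [Metric.emetric_ball_nnreal] at hy
      have hy1 : y ∈ Metric.ball (0 : ℂ) 1 := Metric.ball_subset_ball (le_of_lt hr) hy
      simpa only [zero_add, hp_apply] using (hsum y hy1).hasSum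
  have half_pos' : (0:ℝ) < 1/2 := by norm_num
  have hhalf : HasFPowerSeriesOnBall g p 0 (1/2 : NNReal) := by
    refine hball _ ?_ ?_ <;> norm_num
  -- value at 0
  have hg0 : g 0 = a₀ • (1 : H →L[ℂ] H) := by
    have hgg : g 0 = ∑' k, (0:ℂ) ^ k • B k := rfl
    rw [hgg, tsum_eq_single 0 fun k hk => by rw [zero_pow hk, zero_smul]]
    simp [hB0]
  -- g is bounded by 1 on the ball
  have hgbd : ∀ w ∈ Metric.ball (0 : ℂ) 1, ‖g w‖ ≤ 1 := hbd
  -- differentiability of g on the unit ball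
  have hg_an : ∀ w ∈ Metric.ball (0 : ℂ) 1, DifferentiableAt ℂ g w := by
    intro w hw
    rw [Metric.mem_ball, dist_zero_right] at hw
    set r : NNReal := ⟨(‖w‖ + 1) / 2, by positivity⟩ with hr_def
    have hr1 : (r : ℝ) < 1 := by
      show (‖w‖ + 1) / 2 < 1
      linarith
    have hrpos : 0 < r := by
      rw [← NNReal.coe_pos]
      show (0:ℝ) < (‖w‖ + 1) / 2
      positivity
    have hwr : w ∈ Metric.eball (0 : ℂ) r := by
      rw [Metric.emetric_ball_nnreal, Metric.mem_ball, dist_zero_right]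
      show ‖w‖ < (‖w‖ + 1) / 2
      linarith
    exact ((hball r hr1 hrpos).analyticAt_of_mem hwr).differentiableAt
  -- the unit
  have hu : ∀ w ∈ Metric.ball (0 : ℂ) 1,
      IsUnit ((1 : H →L[ℂ] H) - (starRingEnd ℂ a₀) • g w) := by
    intro w hw
    have h : ‖(starRingEnd ℂ a₀) • g w‖ < 1 := by
      rw [norm_smul, RCLike.norm_conj]
      calc ‖a₀‖ * ‖g w‖ ≤ ‖a₀‖ * 1 :=
            mul_le_mul_of_nonneg_left (hgbd w hw) (norm_nonneg _)
        _ < 1 := by rwa [mul_one]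
    exact (Units.oneSub _ h).isUnit
  set F : ℂ → (H →L[ℂ] H) := fun w =>
    (g w - a₀ • 1) * Ring.inverse ((1 : H →L[ℂ] H) - (starRingEnd ℂ a₀) • g w) with hF_def
  -- F is a contraction
  have hF1 : ∀ w ∈ Metric.ball (0 : ℂ) 1, ‖F w‖ ≤ 1 := by
    intro w hw
    set T := g w with hT_def
    have hT : ‖T‖ ≤ 1 := hgbd w hw
    refine ContinuousLinearMap.opNorm_le_bound _ zero_le_one fun y => ?_
    rw [one_mul]
    set x := Ring.inverse ((1 : H →L[ℂ] H) - (starRingEnd ℂ a₀) • T) y with hx_def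
    have hiy : ((1 : H →L[ℂ] H) - (starRingEnd ℂ a₀) • T) x = y := by
      have hmc := Ring.mul_inverse_cancel _ (hu w hw)
      calc ((1 : H →L[ℂ] H) - (starRingEnd ℂ a₀) • T) x
          = (((1 : H →L[ℂ] H) - (starRingEnd ℂ a₀) • T) *
              Ring.inverse ((1 : H →L[ℂ] H) - (starRingEnd ℂ a₀) • T)) y := rfl
        _ = y := by rw [hmc]; rfl
    have hFwy : F w y = T x - a₀ • x := by
      show ((T - a₀ • 1) * Ring.inverse ((1 : H →L[ℂ] H) - (starRingEnd ℂ a₀) • T)) y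
          = T x - a₀ • x
      rw [ContinuousLinearMap.mul_apply]
      simp [hx_def]
    have hyx : y = x - (starRingEnd ℂ a₀) • T x := by
      rw [← hiy]; simp
    rw [hFwy, hyx]
    exact key_ineq a₀ ha₀.le x (T x)
      ((T.le_opNorm x).trans (by nlinarith [norm_nonneg x]))
  -- differentiability of F
  have hF_diff : ∀ w ∈ Metric.ball (0 : ℂ) 1, DifferentiableAt ℂ F w := by
    intro w hw
    have h1 : DifferentiableAt ℂ (fun w => g w - a₀ • 1) w := (hg_an w hw).sub_const _
    have h2 : DifferentiableAt ℂ
        (fun w => (1 : H →L[ℂ] H) - (starRingEnd ℂ a₀) • g w) w :=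
      (DifferentiableAt.const_smul (hg_an w hw) (starRingEnd ℂ a₀)).const_sub (1 : H →L[ℂ] H)
    exact h1.mul (h2.inverse (hu w hw))
  -- F 0 = 0
  have hF0 : F 0 = 0 := by
    rw [hF_def]
    simp only [hg0, sub_self, zero_mul]
  -- derivative of F at 0
  have hgderiv : HasDerivAt g (B 1) 0 := by
    have := hhalf.hasFPowerSeriesAt.hasDerivAt
    rwa [hp_apply 1 1, one_pow, one_smul] at this
  set c : ℂ := 1 - (starRingEnd ℂ a₀) * a₀ with hc_def
  have hc_real : c = ((1 - ‖a₀‖ ^ 2 : ℝ) : ℂ) := by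
    rw [hc_def]
    have : (starRingEnd ℂ a₀) * a₀ = (Complex.normSq a₀ : ℂ) :=
      (Complex.normSq_eq_conj_mul_self).symm
    rw [this, Complex.normSq_eq_norm_sq]
    push_cast
    rfl
  have hcpos : (0:ℝ) < 1 - ‖a₀‖ ^ 2 := by nlinarith [norm_nonneg a₀]
  have hc0 : c ≠ 0 := by
    rw [hc_real]
    exact_mod_cast ne_of_gt (by exact_mod_cast hcpos)
  have hu0 : ((1 : H →L[ℂ] H) - (starRingEnd ℂ a₀) • (a₀ • 1)) = c • 1 := by
    rw [smul_smul, hc_def, sub_smul, one_smul]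
  have hinv0 : Ring.inverse ((1 : H →L[ℂ] H) - (starRingEnd ℂ a₀) • (a₀ • (1 : H →L[ℂ] H)))
      = c⁻¹ • (1 : H →L[ℂ] H) := by
    rw [hu0]
    have hmul : (c • (1 : H →L[ℂ] H)) * (c⁻¹ • 1) = 1 := by
      rw [smul_mul_assoc, one_mul, smul_smul, mul_inv_cancel₀ hc0, one_smul]
    have hmul' : (c⁻¹ • (1 : H →L[ℂ] H)) * (c • 1) = 1 := by
      rw [smul_mul_assoc, one_mul, smul_smul, inv_mul_cancel₀ hc0, one_smul]
    exact Ring.inverse_unit ⟨c • 1, c⁻¹ • 1, hmul, hmul'⟩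
  have hv_diff : DifferentiableAt ℂ
      (fun w => Ring.inverse ((1 : H →L[ℂ] H) - (starRingEnd ℂ a₀) • g w)) 0 := by
    have hmem : (0:ℂ) ∈ Metric.ball (0:ℂ) 1 := by simp
    exact ((DifferentiableAt.const_smul (hg_an 0 hmem) (starRingEnd ℂ a₀)).const_sub (1 : H →L[ℂ] H)).inverse (hu 0 hmem)
  have hFderiv : HasDerivAt F (c⁻¹ • B 1) 0 := by
    have h1 : HasDerivAt (fun w => g w - a₀ • 1) (B 1) 0 := hgderiv.sub_const _
    have h2 := hv_diff.hasDerivAt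
    have := h1.mul h2
    simp only [hg0, sub_self, zero_mul, add_zero, hinv0] at this
    rw [mul_smul_comm, mul_one] at this
    exact this
  -- Schwarz lemma
  have hDbd : ∀ ε : ℝ, 0 < ε → ε ≤ 1/2 → ‖c⁻¹ • B 1‖ ≤ (1 + ε) / (1 - ε) := by
    intro ε hε hε2
    have hr : (0:ℝ) < 1 - ε := by linarith
    have hsub : Metric.ball (0:ℂ) (1-ε) ⊆ Metric.ball (0:ℂ) 1 :=
      Metric.ball_subset_ball (by linarith)
    have hd : DifferentiableOn ℂ F (Metric.ball (0:ℂ) (1-ε)) :=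
      fun w hw => (hF_diff w (hsub hw)).differentiableWithinAt
    have hmaps : MapsTo F (Metric.ball (0:ℂ) (1-ε)) (Metric.ball (F 0) (1+ε)) := by
      intro w hw
      rw [Metric.mem_ball, hF0, dist_zero_right]
      calc ‖F w‖ ≤ 1 := hF1 w (hsub hw)
        _ < 1 + ε := by linarith
    have := Complex.norm_deriv_le_div_of_mapsTo_ball hd (hmaps.mono_right Metric.ball_subset_closedBall) hr
    rwa [hFderiv.deriv] at this
  have hDle : ‖c⁻¹ • B 1‖ ≤ 1 := le_one_of_eps_bound _ hDbd
  -- conclude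
  have hB1 : B 1 = c • (c⁻¹ • B 1) := by
    rw [smul_smul, mul_inv_cancel₀ hc0, one_smul]
  calc ‖B 1‖ = ‖c • (c⁻¹ • B 1)‖ := by rw [← hB1]
    _ = ‖c‖ * ‖c⁻¹ • B 1‖ := norm_smul _ _
    _ ≤ ‖c‖ * 1 := mul_le_mul_of_nonneg_left hDle (norm_nonneg _)
    _ = 1 - ‖a₀‖ ^ 2 := by
        rw [mul_one, hc_real, Complex.norm_real, Real.norm_eq_abs, abs_of_pos hcpos]
/-- Coefficient estimate for operator valued bounded analytic functions: if
`f(z) = ∑ₖ Aₖ zᵏ` is bounded by `1` on the unit disk and `A₀ = a₀ I` with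
`|a₀| < 1`, then `‖Aₙ‖ ≤ 1 - |a₀|²` for every `n ≥ 1`. -/
theorem operator_coefficient_bound
    {H : Type*} [NormedAddCommGroup H] [InnerProductSpace ℂ H] [CompleteSpace H]
    (f : ℂ → (H →L[ℂ] H)) (A : ℕ → (H →L[ℂ] H))
    (hexp : ∀ z ∈ Metric.ball (0 : ℂ) 1, HasSum (fun k => z ^ k • A k) (f z))
    (hb : ∀ z ∈ Metric.ball (0 : ℂ) 1, ‖f z‖ ≤ 1)
    (a₀ : ℂ) (ha₀ : ‖a₀‖ < 1) (hA0 : A 0 = a₀ • (1 : H →L[ℂ] H))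
    (n : ℕ) (hn : 1 ≤ n) :
    ‖A n‖ ≤ 1 - ‖a₀‖ ^ 2 := by
  classical
  have hn0 : n ≠ 0 := by omega
  have hnC : (n : ℂ) ≠ 0 := Nat.cast_ne_zero.2 hn0
  set ω : ℂ := Complex.exp (2 * Real.pi * Complex.I / n) with hω_def
  have hω : IsPrimitiveRoot ω n := Complex.isPrimitiveRoot_exp n hn0
  have hωnorm : ‖ω‖ = 1 := hω.norm'_eq_one hn0
  -- root of unity sums
  have hSd : ∀ k : ℕ, n ∣ k → (∑ j ∈ Finset.range n, (ω ^ k) ^ j) = (n : ℂ) := by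
    intro k hk
    rw [(hω.pow_eq_one_iff_dvd k).2 hk]
    simp
  have hSnd : ∀ k : ℕ, ¬ n ∣ k → (∑ j ∈ Finset.range n, (ω ^ k) ^ j) = 0 := by
    intro k hk
    have hne : ω ^ k ≠ 1 := fun h => hk ((hω.pow_eq_one_iff_dvd k).1 h)
    rw [geom_sum_eq hne]
    have h1 : (ω ^ k) ^ n = 1 := by
      rw [← pow_mul, mul_comm, pow_mul, hω.pow_eq_one, one_pow]
    rw [h1, sub_self, zero_div]
  -- Wiener averaging
  have key : ∀ w ∈ Metric.ball (0 : ℂ) 1,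
      ∃ S, HasSum (fun k => w ^ k • A (n * k)) S ∧ ‖S‖ ≤ 1 := by
    intro w hw
    rw [Metric.mem_ball, dist_zero_right] at hw
    obtain ⟨z, hz⟩ := IsAlgClosed.exists_pow_nat_eq w (show 0 < n by omega)
    have hzlt : ‖z‖ < 1 := by
      have hzn : ‖z‖ ^ n < 1 := by rw [← norm_pow, hz]; exact hw
      exact (pow_lt_one_iff_of_nonneg (norm_nonneg z) hn0).1 hzn
    have hmem : ∀ j : ℕ, ω ^ j * z ∈ Metric.ball (0 : ℂ) 1 := by
      intro j
      rw [Metric.mem_ball, dist_zero_right, norm_mul, norm_pow, hωnorm, one_pow, one_mul]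
      exact hzlt
    have h1 : HasSum (fun k => ∑ j ∈ Finset.range n, (ω ^ j * z) ^ k • A k)
        (∑ j ∈ Finset.range n, f (ω ^ j * z)) :=
      hasSum_sum fun j _ => hexp _ (hmem j)
    have h2 : (fun k => ∑ j ∈ Finset.range n, (ω ^ j * z) ^ k • A k)
        = fun k => ((∑ j ∈ Finset.range n, (ω ^ k) ^ j) * z ^ k) • A k := by
      funext k
      rw [Finset.sum_mul, ← Finset.sum_smul]
      congr 1
      refine Finset.sum_congr rfl fun j _ => ?_
      rw [mul_pow, pow_right_comm]
    rw [h2] at h1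
    have h3 := h1.const_smul ((n : ℂ)⁻¹)
    have hinj : Function.Injective (fun k : ℕ => n * k) := fun a b hab => by
      exact Nat.eq_of_mul_eq_mul_left (by omega) hab
    have hvan : ∀ m ∉ Set.range (fun k : ℕ => n * k),
        (n : ℂ)⁻¹ • (((∑ j ∈ Finset.range n, (ω ^ m) ^ j) * z ^ m) • A m) = 0 := by
      intro m hm
      have hdvd : ¬ n ∣ m := by
        intro ⟨c, hc⟩
        exact hm ⟨c, hc.symm⟩
      rw [hSnd m hdvd, zero_mul, zero_smul, smul_zero]
    have h4 := (Function.Injective.hasSum_iff hinj hvan).2 h3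
    refine ⟨(n : ℂ)⁻¹ • ∑ j ∈ Finset.range n, f (ω ^ j * z), ?_, ?_⟩
    · refine h4.congr_fun fun k => ?_
      have heq : (n : ℂ)⁻¹ • (((∑ j ∈ Finset.range n, (ω ^ (n * k)) ^ j) * z ^ (n * k))
          • A (n * k)) = w ^ k • A (n * k) := by
        rw [hSd (n * k) ⟨k, rfl⟩, smul_smul, ← mul_assoc, inv_mul_cancel₀ hnC, one_mul,
          pow_mul, hz]
      exact heq.symm
    · rw [norm_smul, norm_inv, Complex.norm_natCast]
      have hsum_le : ‖∑ j ∈ Finset.range n, f (ω ^ j * z)‖ ≤ (n : ℝ) := by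
        calc ‖∑ j ∈ Finset.range n, f (ω ^ j * z)‖
            ≤ ∑ j ∈ Finset.range n, ‖f (ω ^ j * z)‖ := norm_sum_le _ _
          _ ≤ ∑ _j ∈ Finset.range n, (1 : ℝ) :=
              Finset.sum_le_sum fun j _ => hb _ (hmem j)
          _ = (n : ℝ) := by simp
      calc (n : ℝ)⁻¹ * ‖∑ j ∈ Finset.range n, f (ω ^ j * z)‖
          ≤ (n : ℝ)⁻¹ * (n : ℝ) :=
            mul_le_mul_of_nonneg_left hsum_le (by positivity)
        _ = 1 := inv_mul_cancel₀ (by exact_mod_cast hnC)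
  -- apply the first-coefficient bound to B k = A (n * k)
  have hres := coeff_one_bound_s18 (fun k => A (n * k))
    (fun w hw => ((key w hw).choose_spec.1).summable)
    (fun w hw => by
      rw [((key w hw).choose_spec.1).tsum_eq]
      exact (key w hw).choose_spec.2)
    a₀ ha₀ (by simpa using hA0)
  simpa using hres
end
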